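/- arXiv:1301.1888 — 4 statements merged into one kernel-verified Lean document; each statement's English description precedes it below -/
import Mathlib

section
/- For every band B of A, a line H ∈ A separates the two unbounded chambers of B if and only if H is not parallel to the two boundary lines of B; that is, Sep(U_1(B), U_2(B)) is exactly the set of lines of A that are not parallel to the boundary lines of B. -/
open scoped Classical

noncomputable section

abbrev Pt : Type := ℝ × ℝ

/-- An affine-linear functional `a*x + b*y + c` on `ℝ²` with nonzero linear part. -/
structure AffForm : Type where
  a : ℝ
  b : ℝ
  c : ℝ
  nondeg : a ≠ 0 ∨ b ≠ 0

namespace AffForm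

def eval (f : AffForm) (p : Pt) : ℝ := f.a * p.1 + f.b * p.2 + f.c

def line (f : AffForm) : Set Pt := {p | f.eval p = 0}

def Parallel (f g : AffForm) : Prop := f.a * g.b = f.b * g.a

end AffForm

variable {n : ℕ}

/-- An arrangement: at least two distinct affine lines, not all parallel. -/
def IsArrangement (α : Fin n → AffForm) : Prop :=
  2 ≤ n ∧ (∀ i j : Fin n, i ≠ j → (α i).line ≠ (α j).line) ∧
    ∃ i j : Fin n, ¬ (α i).Parallel (α j)

def complement (α : Fin n → AffForm) : Set Pt := {p | ∀ i, (α i).eval p ≠ 0}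

/-- A chamber: a connected component of the complement of the union of the lines. -/
def IsChamber (α : Fin n → AffForm) (C : Set Pt) : Prop :=
  ∃ p ∈ complement α, C = connectedComponentIn (complement α) p

/-- `Sep(C, C')`: the set of indices `i` such that `α i` is positive on one of `C, C'`
and negative on the other. -/
def SepSet (α : Fin n → AffForm) (C C' : Set Pt) : Finset (Fin n) :=
  Finset.univ.filter fun i =>
    ((∀ p ∈ C, 0 < (α i).eval p) ∧ (∀ p ∈ C', (α i).eval p < 0)) ∨
    ((∀ p ∈ C, (α i).eval p < 0) ∧ (∀ p ∈ C', 0 < (α i).eval p))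

/-- `Δ(C, C') = ∏_{i ∈ Sep(C,C')} r i − ∏_{i ∈ Sep(C,C')} (r i)⁻¹`. -/
def Delta (α : Fin n → AffForm) (r : Fin n → ℂ) (C C' : Set Pt) : ℂ :=
  (∏ i ∈ SepSet α C C', r i) - ∏ i ∈ SepSet α C C', (r i)⁻¹

/-- The open strip between two parallel lines `f.line` and `g.line`. -/
def Strip (f g : AffForm) : Set Pt :=
  {p | ∀ q ∈ g.line,
    (0 < f.eval p ∧ f.eval p < f.eval q) ∨ (f.eval q < f.eval p ∧ f.eval p < 0)}

/-- A band: the open strip between two parallel lines of the arrangement containing no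
other line of the arrangement parallel to them. -/
def IsBand (α : Fin n → AffForm) (B : Set Pt) : Prop :=
  ∃ i j : Fin n, i ≠ j ∧ (α i).Parallel (α j) ∧ B = Strip (α i) (α j) ∧
    ∀ k : Fin n, (α k).Parallel (α i) → (α k).line ∩ B = ∅

/-- The data of a band `B` bounded by the parallel lines `H i` and `H j`, together with its
two unbounded chambers `U1` (= `U_1(B)`) and `U2` (= `U_2(B)`). -/
def BandData (α : Fin n → AffForm) (i j : Fin n) (B U1 U2 : Set Pt) : Prop :=
  i ≠ j ∧ (α i).Parallel (α j) ∧ B = Strip (α i) (α j) ∧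
  (∀ k : Fin n, (α k).Parallel (α i) → (α k).line ∩ B = ∅) ∧
  IsChamber α U1 ∧ IsChamber α U2 ∧ U1 ⊆ B ∧ U2 ⊆ B ∧
  ¬ Bornology.IsBounded U1 ∧ ¬ Bornology.IsBounded U2 ∧ U1 ≠ U2

lemma AffForm.continuous_eval (f : AffForm) : Continuous f.eval := by
  unfold AffForm.eval; fun_prop

lemma no_sign_change {s : Set Pt} (hs : IsPreconnected s) (f : AffForm)
    (h : ∀ p ∈ s, f.eval p ≠ 0) {p q : Pt} (hp : p ∈ s) (hq : q ∈ s)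
    (h1 : f.eval p < 0) (h2 : 0 < f.eval q) : False := by
  have h0 : (0:ℝ) ∈ f.eval '' s :=
    hs.intermediate_value hp hq f.continuous_eval.continuousOn ⟨h1.le, h2.le⟩
  obtain ⟨x, hx, hx0⟩ := h0
  exact h x hx hx0

-- affine combination identity
lemma eval_comb (f : AffForm) (a b : ℝ) (p q : Pt) (hab : a + b = 1) :
    f.eval (a • p + b • q) = a * f.eval p + b * f.eval q := by
  simp only [AffForm.eval, Prod.fst_add, Prod.snd_add, Prod.smul_fst, Prod.smul_snd,
    smul_eq_mul]
  linear_combination -f.c * hab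

lemma tc_comb (f : AffForm) (a b : ℝ) (p q : Pt) :
    f.a * (a • p + b • q).2 - f.b * (a • p + b • q).1
      = a * (f.a * p.2 - f.b * p.1) + b * (f.a * q.2 - f.b * q.1) := by
  simp only [Prod.fst_add, Prod.snd_add, Prod.smul_fst, Prod.smul_snd, smul_eq_mul]
  ring


/-- For every band `B` of `A`, a line `H k ∈ A` separates the two unbounded
chambers `U_1(B)`, `U_2(B)` of `B` if and only if `H k` is not parallel to the boundary
lines of `B`: `Sep(U_1(B), U_2(B))` is exactly the set of lines of `A` that are not
parallel to the boundary lines of `B`. -/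
theorem statement0 {n : ℕ} (α : Fin n → AffForm) (hA : IsArrangement α)
    (i j : Fin n) (B U1 U2 : Set Pt) (hB : BandData α i j B U1 U2) :
    SepSet α U1 U2 = Finset.univ.filter fun k : Fin n => ¬ (α k).Parallel (α i) := by
  obtain ⟨hij, hpar, hBdef, hband, hC1, hC2, hU1B, hU2B, hUb1, hUb2, hne⟩ := hB
  -- a point on the line of α j
  have hgpt : ∃ q, q ∈ (α j).line := by
    rcases (α j).nondeg with h | h
    · refine ⟨(-(α j).c / (α j).a, 0), ?_⟩
      show (α j).eval _ = 0
      simp only [AffForm.eval]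
      field_simp
      ring
    · refine ⟨(0, -(α j).c / (α j).b), ?_⟩
      show (α j).eval _ = 0
      simp only [AffForm.eval]
      field_simp
      ring
  obtain ⟨q0, hq0⟩ := hgpt
  set c0 : ℝ := (α i).eval q0 with hc0def
  -- (α i).eval is constant on the line of α j
  have hconst : ∀ q ∈ (α j).line, (α i).eval q = c0 := by
    intro q hq
    have h1 : (α j).a * q.1 + (α j).b * q.2 + (α j).c = 0 := hq
    have h2 : (α j).a * q0.1 + (α j).b * q0.2 + (α j).c = 0 := hq0
    have hpar' : (α i).a * (α j).b = (α i).b * (α j).a := hpar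
    rcases (α j).nondeg with h | h
    · have key : (α j).a * ((α i).eval q) = (α j).a * ((α i).eval q0) := by
        simp only [AffForm.eval, hc0def]
        linear_combination (α i).a * h1 - (α i).a * h2 - (q.2 - q0.2) * hpar'
      exact mul_left_cancel₀ h key
    · have key : (α j).b * ((α i).eval q) = (α j).b * ((α i).eval q0) := by
        simp only [AffForm.eval, hc0def]
        linear_combination (α i).b * h1 - (α i).b * h2 + (q.1 - q0.1) * hpar'
      exact mul_left_cancel₀ h key
  -- characterization of the strip
  have hmem : ∀ p, p ∈ B ↔ (α i).eval p ∈ Set.Ioo (min c0 0) (max c0 0) := by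
    intro p
    rw [hBdef]
    constructor
    · intro h
      rcases h q0 hq0 with ⟨h1, h2⟩ | ⟨h1, h2⟩
      · exact ⟨lt_of_le_of_lt (min_le_right _ _) h1, lt_of_lt_of_le h2 (le_max_left _ _)⟩
      · exact ⟨lt_of_le_of_lt (min_le_left _ _) h1, lt_of_lt_of_le h2 (le_max_right _ _)⟩
    · rintro ⟨h1, h2⟩ q hq
      rw [hconst q hq]
      rcases lt_trichotomy c0 0 with hc | hc | hc
      · rw [min_eq_left hc.le] at h1; rw [max_eq_right hc.le] at h2
        exact Or.inr ⟨h1, h2⟩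
      · rw [hc] at h1 h2; simp at h1 h2; linarith
      · rw [min_eq_right hc.le] at h1; rw [max_eq_left hc.le] at h2
        exact Or.inl ⟨h1, h2⟩
  -- the along-strip coordinate
  set tc : Pt → ℝ := fun p => (α i).a * p.2 - (α i).b * p.1 with htcdef
  have hDq : (0:ℝ) < (α i).a ^ 2 + (α i).b ^ 2 := by
    rcases (α i).nondeg with h | h <;> positivity
  set Dq : ℝ := (α i).a ^ 2 + (α i).b ^ 2 with hDqdef
  -- bound on the transverse coordinate in the band
  have hsb : ∀ p ∈ B, |(α i).eval p| ≤ |c0| := by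
    intro p hp
    rw [hmem] at hp
    rw [abs_le]
    constructor
    · calc -|c0| ≤ min c0 0 := le_min (neg_abs_le c0) (neg_nonpos.2 (abs_nonneg c0))
        _ ≤ (α i).eval p := hp.1.le
    · calc (α i).eval p ≤ max c0 0 := hp.2.le
        _ ≤ |c0| := max_le (le_abs_self c0) (abs_nonneg c0)
  -- quantities attached to each index k
  set Ak : Fin n → ℝ := fun k => (α k).a * (α i).a + (α k).b * (α i).b with hAkdef
  set muk : Fin n → ℝ := fun k => (α k).b * (α i).a - (α k).a * (α i).b with hmukdef
  set Ek : Fin n → ℝ := fun k => |Ak k| * (|c0| + |(α i).c|) + Dq * |(α k).c| with hEkdef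
  set Tk : Fin n → ℝ := fun k => Ek k / |muk k| with hTkdef
  have hmu_ne : ∀ k, ¬ (α k).Parallel (α i) → muk k ≠ 0 := by
    intro k hk h0
    apply hk
    show (α k).a * (α i).b = (α k).b * (α i).a
    have : (α k).b * (α i).a - (α k).a * (α i).b = 0 := h0
    linarith
  have hid : ∀ k (p : Pt), Dq * (α k).eval p
      = Ak k * ((α i).eval p - (α i).c) + muk k * tc p + Dq * (α k).c := by
    intro k p
    simp only [AffForm.eval, hAkdef, hmukdef, hDqdef, htcdef]
    ring
  -- sign of (α k).eval far out in the band
  have hfar : ∀ k, ¬ (α k).Parallel (α i) → ∀ p ∈ B,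
      (Tk k < tc p → 0 < muk k * (α k).eval p) ∧
      (tc p < -Tk k → muk k * (α k).eval p < 0) := by
    intro k hk p hp
    have hmu : muk k ≠ 0 := hmu_ne k hk
    have hmua : 0 < |muk k| := abs_pos.2 hmu
    have hsp : |(α i).eval p| ≤ |c0| := hsb p hp
    have hsc : |(α i).eval p - (α i).c| ≤ |c0| + |(α i).c| :=
      le_trans (abs_sub _ _) (by gcongr)
    have hb1 : |muk k * (Ak k * ((α i).eval p - (α i).c))|
        ≤ |muk k| * (|Ak k| * (|c0| + |(α i).c|)) := by
      rw [abs_mul, abs_mul]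
      gcongr
    have hb2 : |muk k * (Dq * (α k).c)| ≤ |muk k| * (Dq * |(α k).c|) := by
      rw [abs_mul, abs_mul, abs_of_pos hDq]
    have hTkE : |muk k| * Tk k = Ek k := by
      rw [hTkdef]
      field_simp
    have hmusq : muk k * muk k = |muk k| * |muk k| := (abs_mul_abs_self _).symm
    have hid2 : Dq * (muk k * (α k).eval p)
        = muk k * (Ak k * ((α i).eval p - (α i).c)) + muk k * muk k * tc p
          + muk k * (Dq * (α k).c) := by
      linear_combination muk k * hid k p
    have hEexp : |muk k| * Ek k
        = |muk k| * (|Ak k| * (|c0| + |(α i).c|)) + |muk k| * (Dq * |(α k).c|) := by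
      rw [hEkdef]; ring
    have hms : 0 < muk k * muk k := mul_self_pos.2 hmu
    have h4 : muk k * muk k * Tk k = |muk k| * Ek k := by
      rw [hmusq, mul_assoc, hTkE]
    constructor
    · intro ht
      have h3' : muk k * muk k * Tk k < muk k * muk k * tc p :=
        mul_lt_mul_of_pos_left ht hms
      have h5' : 0 < Dq * (muk k * (α k).eval p) := by
        have l1 := (abs_le.1 hb1).1
        have l2 := (abs_le.1 hb2).1
        linarith [h3', h4, hEexp, hid2]
      rcases mul_pos_iff.1 h5' with ⟨_, hgoal⟩ | ⟨hbad, _⟩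
      · exact hgoal
      · linarith
    · intro ht
      have h3' : muk k * muk k * tc p < muk k * muk k * (-Tk k) :=
        mul_lt_mul_of_pos_left ht hms
      have h5' : Dq * (muk k * (α k).eval p) < 0 := by
        have l1 := (abs_le.1 hb1).2
        have l2 := (abs_le.1 hb2).2
        linarith [h3', h4, hEexp, hid2]
      rcases mul_neg_iff.1 h5' with ⟨_, hgoal⟩ | ⟨hbad, _⟩
      · exact hgoal
      · linarith
  -- a uniform threshold
  obtain ⟨T0, hT0⟩ : ∃ T0 : ℝ, ∀ k, Tk k ≤ T0 := by
    obtain ⟨T0, hT0⟩ := (Set.finite_range Tk).bddAbove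
    exact ⟨T0, fun k => hT0 ⟨k, rfl⟩⟩
  -- the two far regions
  set Rp : Set Pt := {p | p ∈ B ∧ T0 < tc p} with hRpdef
  set Rm : Set Pt := {p | p ∈ B ∧ tc p < -T0} with hRmdef
  have hBconv : Convex ℝ B := by
    intro p hp q hq a b ha hb hab
    rw [hmem] at hp hq ⊢
    rw [eval_comb (α i) a b p q hab]
    have := convex_Ioo (min c0 0) (max c0 0) hp hq ha hb hab
    simpa using this
  have hRpconv : Convex ℝ Rp := by
    intro p hp q hq a b ha hb hab
    refine ⟨hBconv hp.1 hq.1 ha hb hab, ?_⟩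
    show T0 < tc _
    rw [htcdef]
    simp only
    rw [tc_comb (α i) a b p q]
    have h1 : T0 < tc p := hp.2
    have h2 : T0 < tc q := hq.2
    have := convex_Ioi T0 h1 h2 ha hb hab
    simpa [htcdef] using this
  have hRmconv : Convex ℝ Rm := by
    intro p hp q hq a b ha hb hab
    refine ⟨hBconv hp.1 hq.1 ha hb hab, ?_⟩
    show tc _ < -T0
    rw [htcdef]
    simp only
    rw [tc_comb (α i) a b p q]
    have h1 : tc p < -T0 := hp.2
    have h2 : tc q < -T0 := hq.2
    have := convex_Iio (-T0) h1 h2 ha hb hab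
    simpa [htcdef] using this
  -- eval of parallel lines never vanishes on the band
  have hparB : ∀ k, (α k).Parallel (α i) → ∀ p ∈ B, (α k).eval p ≠ 0 := by
    intro k hk p hp h0
    exact Set.eq_empty_iff_forall_notMem.1 (hband k hk) p ⟨h0, hp⟩
  -- far regions are inside the complement
  have hRpcompl : Rp ⊆ complement α := by
    rintro p ⟨hpB, hpt⟩ k
    by_cases hk : (α k).Parallel (α i)
    · exact hparB k hk p hpB
    · intro h0
      have := ((hfar k hk p hpB).1 (lt_of_le_of_lt (hT0 k) hpt))
      rw [h0] at this
      simp at this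
  have hRmcompl : Rm ⊆ complement α := by
    rintro p ⟨hpB, hpt⟩ k
    by_cases hk : (α k).Parallel (α i)
    · exact hparB k hk p hpB
    · intro h0
      have hlt : tc p < -Tk k := lt_of_lt_of_le hpt (by linarith [hT0 k])
      have := ((hfar k hk p hpB).2 hlt)
      rw [h0] at this
      simp at this
  -- unbounded chambers reach a far region
  have hfarpt : ∀ U : Set Pt, U ⊆ B → ¬ Bornology.IsBounded U →
      (∃ p ∈ U, T0 < tc p) ∨ (∃ p ∈ U, tc p < -T0) := by
    intro U hUB hUb
    by_contra hcon
    push_neg at hcon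
    obtain ⟨h1, h2⟩ := hcon
    apply hUb
    rw [isBounded_iff_forall_norm_le]
    refine ⟨((|(α i).a| + |(α i).b|) * ((|c0| + |(α i).c|) + |T0|)) / Dq, ?_⟩
    intro p hp
    have htb : |tc p| ≤ |T0| := by
      rw [abs_le]
      constructor
      · linarith [h2 p hp, le_abs_self T0]
      · linarith [h1 p hp, le_abs_self T0]
    have hsc : |(α i).eval p - (α i).c| ≤ |c0| + |(α i).c| :=
      le_trans (abs_sub _ _) (add_le_add_left (hsb p (hUB hp)) _)
    have hx : Dq * p.1 = (α i).a * ((α i).eval p - (α i).c) - (α i).b * tc p := by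
      simp only [AffForm.eval, hDqdef, htcdef]; ring
    have hy : Dq * p.2 = (α i).b * ((α i).eval p - (α i).c) + (α i).a * tc p := by
      simp only [AffForm.eval, hDqdef, htcdef]; ring
    have hxb : Dq * |p.1| ≤ (|(α i).a| + |(α i).b|) * ((|c0| + |(α i).c|) + |T0|) := by
      have : |Dq * p.1| ≤ |(α i).a| * (|c0| + |(α i).c|) + |(α i).b| * |T0| := by
        rw [hx]
        refine le_trans (abs_sub _ _) ?_
        rw [abs_mul, abs_mul]
        gcongr
      rw [abs_mul, abs_of_pos hDq] at this
      nlinarith [mul_nonneg (abs_nonneg (α i).a) (abs_nonneg T0),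
        mul_nonneg (abs_nonneg (α i).b) (add_nonneg (abs_nonneg c0) (abs_nonneg (α i).c))]
    have hyb : Dq * |p.2| ≤ (|(α i).a| + |(α i).b|) * ((|c0| + |(α i).c|) + |T0|) := by
      have : |Dq * p.2| ≤ |(α i).b| * (|c0| + |(α i).c|) + |(α i).a| * |T0| := by
        rw [hy]
        refine le_trans (abs_add_le _ _) ?_
        rw [abs_mul, abs_mul]
        gcongr
      rw [abs_mul, abs_of_pos hDq] at this
      nlinarith [mul_nonneg (abs_nonneg (α i).b) (abs_nonneg T0),
        mul_nonneg (abs_nonneg (α i).a) (add_nonneg (abs_nonneg c0) (abs_nonneg (α i).c))]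
    rw [Prod.norm_def]
    rw [le_div_iff₀ hDq]
    rw [Real.norm_eq_abs, Real.norm_eq_abs]
    rcases max_cases |p.1| |p.2| with ⟨hm, _⟩ | ⟨hm, _⟩ <;> rw [hm] <;> linarith
  -- chamber generalities
  have hcc : ∀ U : Set Pt, IsChamber α U → ∀ p ∈ U,
      U = connectedComponentIn (complement α) p := by
    rintro U ⟨p0, hp0, hU⟩ p hp
    rw [hU] at hp ⊢
    exact connectedComponentIn_eq hp
  have hchsub : ∀ U : Set Pt, IsChamber α U → U ⊆ complement α := by
    rintro U ⟨p0, hp0, hU⟩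
    rw [hU]
    exact connectedComponentIn_subset _ _
  have hchconn : ∀ U : Set Pt, IsChamber α U → IsPreconnected U := by
    rintro U ⟨p0, hp0, hU⟩
    rw [hU]
    exact isPreconnected_connectedComponentIn
  have hsame : ∀ S : Set Pt, IsPreconnected S → S ⊆ complement α →
      ∀ p ∈ S, ∀ q ∈ S, p ∈ U1 → q ∈ U2 → U1 = U2 := by
    intro S hS hScompl p hpS q hqS hpU hqU
    have h1 : U1 = connectedComponentIn (complement α) p := hcc U1 hC1 p hpU
    have h2 : U2 = connectedComponentIn (complement α) q := hcc U2 hC2 q hqU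
    have h3 : S ⊆ connectedComponentIn (complement α) p :=
      hS.subset_connectedComponentIn hpS hScompl
    have h4 : q ∈ connectedComponentIn (complement α) p := h3 hqS
    rw [h1, h2, connectedComponentIn_eq h4]
  -- the main computation for two chambers at opposite ends
  have main : ∀ V1 V2 : Set Pt, IsChamber α V1 → IsChamber α V2 → V1 ⊆ B → V2 ⊆ B →
      (∃ p ∈ V1, T0 < tc p) → (∃ q ∈ V2, tc q < -T0) →
      SepSet α V1 V2 = Finset.univ.filter fun k : Fin n => ¬ (α k).Parallel (α i) := by
    rintro V1 V2 hCV1 hCV2 hV1B hV2B ⟨p1, hp1V, hp1t⟩ ⟨q1, hq1V, hq1t⟩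
    ext k
    simp only [SepSet, Finset.mem_filter, Finset.mem_univ, true_and]
    by_cases hk : (α k).Parallel (α i)
    · simp only [hk, not_true, iff_false]
      rintro (⟨hpos, hneg⟩ | ⟨hneg, hpos⟩)
      · exact no_sign_change hBconv.isPreconnected (α k) (hparB k hk)
          (hV2B hq1V) (hV1B hp1V) (hneg q1 hq1V) (hpos p1 hp1V)
      · exact no_sign_change hBconv.isPreconnected (α k) (hparB k hk)
          (hV1B hp1V) (hV2B hq1V) (hneg p1 hp1V) (hpos q1 hq1V)
    · simp only [hk, not_false_iff, iff_true]
      have h1 : 0 < muk k * (α k).eval p1 :=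
        (hfar k hk p1 (hV1B hp1V)).1 (lt_of_le_of_lt (hT0 k) hp1t)
      have h2 : muk k * (α k).eval q1 < 0 :=
        (hfar k hk q1 (hV2B hq1V)).2 (lt_of_lt_of_le hq1t (by linarith [hT0 k]))
      have hV1compl := hchsub V1 hCV1
      have hV2compl := hchsub V2 hCV2
      have hV1conn := hchconn V1 hCV1
      have hV2conn := hchconn V2 hCV2
      have hne1 : ∀ p ∈ V1, (α k).eval p ≠ 0 := fun p hp => hV1compl hp k
      have hne2 : ∀ p ∈ V2, (α k).eval p ≠ 0 := fun p hp => hV2compl hp k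
      have hallpos : ∀ (V : Set Pt), IsPreconnected V → (∀ p ∈ V, (α k).eval p ≠ 0) →
          ∀ r ∈ V, 0 < (α k).eval r → ∀ p ∈ V, 0 < (α k).eval p := by
        intro V hVconn hVne r hrV hr p hpV
        by_contra hcon
        exact no_sign_change hVconn (α k) hVne hpV hrV
          (lt_of_le_of_ne (not_lt.1 hcon) (hVne p hpV)) hr
      have hallneg : ∀ (V : Set Pt), IsPreconnected V → (∀ p ∈ V, (α k).eval p ≠ 0) →
          ∀ r ∈ V, (α k).eval r < 0 → ∀ p ∈ V, (α k).eval p < 0 := by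
        intro V hVconn hVne r hrV hr p hpV
        by_contra hcon
        exact no_sign_change hVconn (α k) hVne hrV hpV hr
          (lt_of_le_of_ne (not_lt.1 hcon) (hVne p hpV).symm)
      rcases mul_pos_iff.1 h1 with ⟨hmu, he1⟩ | ⟨hmu, he1⟩ <;>
        rcases mul_neg_iff.1 h2 with ⟨hmu', he2⟩ | ⟨hmu', he2⟩
      · exact Or.inl ⟨hallpos V1 hV1conn hne1 p1 hp1V he1,
          hallneg V2 hV2conn hne2 q1 hq1V he2⟩
      · exact absurd hmu (not_lt.2 hmu'.le)
      · exact absurd hmu' (not_lt.2 hmu.le)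
      · exact Or.inr ⟨hallneg V1 hV1conn hne1 p1 hp1V he1,
          hallpos V2 hV2conn hne2 q1 hq1V he2⟩
  have hsymm : SepSet α U2 U1 = SepSet α U1 U2 := by
    unfold SepSet
    ext k
    simp only [Finset.mem_filter]
    tauto
  rcases hfarpt U1 hU1B hUb1 with h1 | h1 <;> rcases hfarpt U2 hU2B hUb2 with h2 | h2
  · obtain ⟨p1, hp1, ht1⟩ := h1
    obtain ⟨q1, hq1, ht2⟩ := h2
    exact absurd (hsame Rp hRpconv.isPreconnected hRpcompl p1 ⟨hU1B hp1, ht1⟩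
      q1 ⟨hU2B hq1, ht2⟩ hp1 hq1) hne
  · exact main U1 U2 hC1 hC2 hU1B hU2B h1 h2
  · rw [← hsymm]
    exact main U2 U1 hC2 hC1 hU2B hU1B h2 h1
  · obtain ⟨p1, hp1, ht1⟩ := h1
    obtain ⟨q1, hq1, ht2⟩ := h2
    exact absurd (hsame Rm hRmconv.isPreconnected hRmcompl p1 ⟨hU1B hp1, ht1⟩
      q1 ⟨hU2B hq1, ht2⟩ hp1 hq1) hne

end
end

section
/- For every band B of A and every chamber C ∈ ch(A) with C ⊆ B, the sets Sep(U_1(B), C) and Sep(U_2(B), C) are disjoint and their union equals Sep(U_1(B), U_2(B)). -/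
open scoped Classical

noncomputable section

variable {n : ℕ}

/- ----------------- auxiliary lemmas ----------------- -/

lemma abs_sub_le' (a b : ℝ) : |a - b| ≤ |a| + |b| := by
  have := abs_add_le a (-b); rwa [abs_neg, ← sub_eq_add_neg] at this

lemma eval_continuous (g : AffForm) : Continuous fun p : Pt => g.eval p := by
  unfold AffForm.eval; fun_prop

lemma chamber_nonempty {α : Fin n → AffForm} {C : Set Pt} (hC : IsChamber α C) :
    ∃ p, p ∈ C := by
  obtain ⟨p0, hp0, rfl⟩ := hC
  exact ⟨p0, mem_connectedComponentIn hp0⟩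

lemma chamber_subset {α : Fin n → AffForm} {C : Set Pt} (hC : IsChamber α C) :
    C ⊆ complement α := by
  obtain ⟨p0, hp0, rfl⟩ := hC
  exact connectedComponentIn_subset _ _

lemma chamber_sign {α : Fin n → AffForm} {C : Set Pt} (hC : IsChamber α C) (k : Fin n) :
    (∀ p ∈ C, 0 < (α k).eval p) ∨ (∀ p ∈ C, (α k).eval p < 0) := by
  obtain ⟨p0, hp0, rfl⟩ := hC
  set S := connectedComponentIn (complement α) p0 with hS
  have hsub : S ⊆ complement α := connectedComponentIn_subset _ _
  have hconn : IsPreconnected S := isPreconnected_connectedComponentIn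
  by_contra h
  push_neg at h
  obtain ⟨⟨p1, hp1, h1⟩, ⟨p2, hp2, h2⟩⟩ := h
  have e1 : (α k).eval p1 < 0 := lt_of_le_of_ne h1 (hsub hp1 k)
  have e2 : 0 < (α k).eval p2 := lt_of_le_of_ne h2 (Ne.symm (hsub hp2 k))
  have hiv := hconn.intermediate_value hp1 hp2 ((eval_continuous (α k)).continuousOn)
  obtain ⟨q, hq, hq0⟩ := hiv ⟨le_of_lt e1, le_of_lt e2⟩
  exact hsub hq k hq0

lemma chamber_neg_iff {α : Fin n → AffForm} {C : Set Pt} (hC : IsChamber α C) (k : Fin n) :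
    (∀ p ∈ C, (α k).eval p < 0) ↔ ¬ (∀ p ∈ C, 0 < (α k).eval p) := by
  obtain ⟨p, hp⟩ := chamber_nonempty hC
  constructor
  · intro hneg hpos
    exact absurd (hpos p hp) (not_lt.mpr (le_of_lt (hneg p hp)))
  · intro hnp
    rcases chamber_sign hC k with h | h
    · exact absurd h hnp
    · exact h

lemma convex_aff_preimage (A B C0 : ℝ) {s : Set ℝ} (hs : Convex ℝ s) :
    Convex ℝ {p : Pt | A * p.1 + B * p.2 + C0 ∈ s} := by
  intro x hx y hy a b ha hb hab
  have key : A * (a • x + b • y).1 + B * (a • x + b • y).2 + C0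
      = a * (A * x.1 + B * x.2 + C0) + b * (A * y.1 + B * y.2 + C0) := by
    have h1 : (a • x + b • y).1 = a * x.1 + b * y.1 := rfl
    have h2 : (a • x + b • y).2 = a * x.2 + b * y.2 := rfl
    rw [h1, h2]
    linear_combination (-C0) * hab
  have hmem := hs hx hy ha hb hab
  show A * (a • x + b • y).1 + B * (a • x + b • y).2 + C0 ∈ s
  rw [key]
  simpa [smul_eq_mul] using hmem

set_option maxHeartbeats 2000000 in
/-- For every band `B` of `A` and every chamber `C` with `C ⊆ B`, the sets
`Sep(U_1(B), C)` and `Sep(U_2(B), C)` are disjoint and their union equals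
`Sep(U_1(B), U_2(B))`. -/
theorem statement2 {n : ℕ} (α : Fin n → AffForm) (hA : IsArrangement α)
    (i j : Fin n) (B U1 U2 : Set Pt) (hB : BandData α i j B U1 U2)
    (C : Set Pt) (hC : IsChamber α C) (hCB : C ⊆ B) :
    Disjoint (SepSet α U1 C) (SepSet α U2 C) ∧
    SepSet α U1 C ∪ SepSet α U2 C = SepSet α U1 U2 := by
  obtain ⟨hij, hparij, hBdef, hband, hU1, hU2, hU1B, hU2B, hU1ub, hU2ub, hU12⟩ := hB
  set f := α i with hfdef
  set g := α j with hgdef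
  have hN : (0:ℝ) < f.a^2 + f.b^2 := by
    rcases f.nondeg with h | h
    · positivity
    · positivity
  have hNg : (0:ℝ) < g.a^2 + g.b^2 := by
    rcases g.nondeg with h | h
    · positivity
    · positivity
  set N := f.a^2 + f.b^2 with hNdef
  set μ0 := f.c - (f.a*g.a + f.b*g.b)*g.c/(g.a^2+g.b^2) with hmu
  have hconst : ∀ q ∈ g.line, f.eval q = μ0 := by
    intro q hq
    have hq' : g.a * q.1 + g.b * q.2 + g.c = 0 := hq
    have hp' : f.a * g.b = f.b * g.a := hparij
    rw [hmu]
    show f.a * q.1 + f.b * q.2 + f.c = _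
    have hNg' : (g.a^2 + g.b^2) ≠ 0 := ne_of_gt hNg
    field_simp
    linear_combination ((f.a*g.a + f.b*g.b)) * hq' + ((g.b*q.1 - g.a*q.2)) * hp'
  set m := min 0 μ0 with hmdef
  set M := max 0 μ0 with hMdef
  have hstrip : ∀ p : Pt, p ∈ B ↔ f.eval p ∈ Set.Ioo m M := by
    have hq0ex : ∃ q : Pt, q ∈ g.line := by
      rcases g.nondeg with h | h
      · refine ⟨(-g.c/g.a, 0), ?_⟩
        show g.a * (-g.c/g.a) + g.b * 0 + g.c = 0
        field_simp
        ring
      · refine ⟨(0, -g.c/g.b), ?_⟩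
        show g.a * 0 + g.b * (-g.c/g.b) + g.c = 0
        field_simp
        ring
    obtain ⟨q0, hq0⟩ := hq0ex
    intro p
    rw [hBdef]
    constructor
    · intro hp
      have h := hp q0 hq0
      rw [hconst q0 hq0] at h
      rcases h with ⟨h1, h2⟩ | ⟨h1, h2⟩
      · rw [hmdef, hMdef, min_eq_left (le_of_lt (lt_trans h1 h2)),
          max_eq_right (le_of_lt (lt_trans h1 h2))]
        exact ⟨h1, h2⟩
      · rw [hmdef, hMdef, min_eq_right (le_of_lt (lt_trans h1 h2)),
          max_eq_left (le_of_lt (lt_trans h1 h2))]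
        exact ⟨h1, h2⟩
    · intro hp q hq
      rw [hconst q hq]
      rcases lt_trichotomy μ0 0 with h | h | h
      · right
        rw [hmdef, hMdef, min_eq_right (le_of_lt h), max_eq_left (le_of_lt h)] at hp
        exact ⟨hp.1, hp.2⟩
      · exfalso
        rw [hmdef, hMdef, h] at hp
        simp at hp
      · left
        rw [hmdef, hMdef, min_eq_left (le_of_lt h), max_eq_right (le_of_lt h)] at hp
        exact ⟨hp.1, hp.2⟩
  have habs_mu : ∀ x : ℝ, x ∈ Set.Ioo m M → |x| ≤ |μ0| := by
    intro x hx
    have hm1 : -|μ0| ≤ m := le_min (by simp [abs_nonneg]) (neg_abs_le μ0)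
    have hM1 : M ≤ |μ0| := max_le (abs_nonneg μ0) (le_abs_self μ0)
    exact abs_le.mpr ⟨by linarith [hx.1], by linarith [hx.2]⟩
  set K := |μ0| + |f.c| with hKdef
  have hK : 0 ≤ K := by rw [hKdef]; positivity
  have hu : ∀ p ∈ B, |f.a*p.1 + f.b*p.2| ≤ K := by
    intro p hp
    have h1 : |f.eval p| ≤ |μ0| := habs_mu _ ((hstrip p).mp hp)
    have h2 : f.a*p.1+f.b*p.2 = f.eval p - f.c := by
      show _ = (f.a * p.1 + f.b * p.2 + f.c) - f.c; ring
    rw [h2]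
    calc |f.eval p - f.c| ≤ |f.eval p| + |f.c| := abs_sub_le' _ _
      _ ≤ K := by rw [hKdef]; linarith
  set tc : Pt → ℝ := fun p => f.a * p.2 - f.b * p.1 with htc
  set d : Fin n → ℝ := fun k => f.a*(α k).b - f.b*(α k).a with hd
  set e : Fin n → ℝ := fun k => (α k).a*f.a + (α k).b*f.b with he
  have hid : ∀ (k : Fin n) (p : Pt),
      N * (α k).eval p = e k * (f.a*p.1 + f.b*p.2) + d k * tc p + N * (α k).c := by
    intro k p
    simp only [hd, he, htc, hNdef]
    show _ * ((α k).a * p.1 + (α k).b * p.2 + (α k).c) = _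
    ring
  have hd_par : ∀ k, d k = 0 → (α k).Parallel f := by
    intro k h
    simp only [hd] at h
    show (α k).a * f.b = (α k).b * f.a
    linarith
  -- the threshold T
  have hck : ∀ k : Fin n, 0 ≤ |e k| * K + N * |(α k).c| + 1 := by
    intro k
    have h1 : 0 ≤ |e k| * K := mul_nonneg (abs_nonneg _) hK
    have h2 : 0 ≤ N * |(α k).c| := mul_nonneg (le_of_lt hN) (abs_nonneg _)
    linarith
  set T := 1 + ∑ k : Fin n, (|e k| * K + N * |(α k).c| + 1) / |d k| with hTdef
  have hsum_nonneg : ∀ k : Fin n, 0 ≤ (|e k| * K + N * |(α k).c| + 1)/|d k| :=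
    fun k => div_nonneg (hck k) (abs_nonneg _)
  have hT0 : 0 < T := by
    rw [hTdef]
    have := Finset.sum_nonneg (fun k (_ : k ∈ Finset.univ) => hsum_nonneg k)
    linarith
  have hTk : ∀ k, d k ≠ 0 → |e k| * K + N * |(α k).c| + 1 ≤ |d k| * T := by
    intro k hk
    have h1 : (|e k| * K + N * |(α k).c| + 1)/|d k|
        ≤ ∑ k' : Fin n, (|e k'| * K + N * |(α k').c| + 1)/|d k'| :=
      Finset.single_le_sum (fun k' (_ : k' ∈ Finset.univ) => hsum_nonneg k') (Finset.mem_univ k)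
    have h2 : (|e k| * K + N * |(α k).c| + 1)/|d k| ≤ T - 1 := by rw [hTdef]; linarith
    have hdk : 0 < |d k| := abs_pos.mpr hk
    rw [div_le_iff₀ hdk] at h2
    nlinarith [hdk]
  clear_value N μ0 m M K tc d e T
  have hsignP : ∀ k, ∀ p ∈ B, d k ≠ 0 → T ≤ tc p →
      ((0 < d k → 0 < (α k).eval p) ∧ (d k < 0 → (α k).eval p < 0)) := by
    intro k p hp hdk ht
    have hid' := hid k p
    have hu' := hu p hp
    have hck' := hTk k hdk
    have he1 : |e k * (f.a*p.1 + f.b*p.2)| ≤ |e k| * K := by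
      rw [abs_mul]; exact mul_le_mul_of_nonneg_left hu' (abs_nonneg _)
    have he2 := abs_le.mp he1
    have hc1 : N * (α k).c ≤ N * |(α k).c| :=
      mul_le_mul_of_nonneg_left (le_abs_self _) (le_of_lt hN)
    have hc2 : -(N * |(α k).c|) ≤ N * (α k).c := by
      have := mul_le_mul_of_nonneg_left (neg_abs_le ((α k).c)) (le_of_lt hN)
      linarith
    constructor
    · intro hpos
      have habs : |d k| = d k := abs_of_pos hpos
      rw [habs] at hck'
      have h3 : d k * T ≤ d k * tc p := mul_le_mul_of_nonneg_left ht (le_of_lt hpos)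
      have h4 : 0 < N * (α k).eval p := by linarith [he2.1]
      nlinarith [hN]
    · intro hneg
      have habs : |d k| = -(d k) := abs_of_neg hneg
      rw [habs] at hck'
      have h3 : d k * tc p ≤ d k * T := mul_le_mul_of_nonpos_left ht (le_of_lt hneg)
      have h4 : N * (α k).eval p < 0 := by linarith [he2.2]
      nlinarith [hN]
  have hsignN : ∀ k, ∀ p ∈ B, d k ≠ 0 → tc p ≤ -T →
      ((0 < d k → (α k).eval p < 0) ∧ (d k < 0 → 0 < (α k).eval p)) := by
    intro k p hp hdk ht
    have hid' := hid k p
    have hu' := hu p hp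
    have hck' := hTk k hdk
    have he1 : |e k * (f.a*p.1 + f.b*p.2)| ≤ |e k| * K := by
      rw [abs_mul]; exact mul_le_mul_of_nonneg_left hu' (abs_nonneg _)
    have he2 := abs_le.mp he1
    have hc1 : N * (α k).c ≤ N * |(α k).c| :=
      mul_le_mul_of_nonneg_left (le_abs_self _) (le_of_lt hN)
    have hc2 : -(N * |(α k).c|) ≤ N * (α k).c := by
      have := mul_le_mul_of_nonneg_left (neg_abs_le ((α k).c)) (le_of_lt hN)
      linarith
    constructor
    · intro hpos
      have habs : |d k| = d k := abs_of_pos hpos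
      rw [habs] at hck'
      have h3 : d k * tc p ≤ d k * (-T) := mul_le_mul_of_nonneg_left ht (le_of_lt hpos)
      have h4 : N * (α k).eval p < 0 := by nlinarith [he2.2]
      nlinarith [hN]
    · intro hneg
      have habs : |d k| = -(d k) := abs_of_neg hneg
      rw [habs] at hck'
      have h3 : d k * (-T) ≤ d k * tc p := mul_le_mul_of_nonpos_left ht (le_of_lt hneg)
      have h4 : 0 < N * (α k).eval p := by nlinarith [he2.1]
      nlinarith [hN]
  -- crossing a line inside the strip
  have hcross : ∀ k : Fin n, ∀ q1 ∈ B, ∀ q2 ∈ B,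
      (α k).eval q1 < 0 → 0 < (α k).eval q2 → ∃ p ∈ B, (α k).eval p = 0 := by
    intro k q1 hq1 q2 hq2 hn hp
    set L := (α k).eval q2 - (α k).eval q1 with hL
    have hL0 : 0 < L := by rw [hL]; linarith
    have hLne : L ≠ 0 := ne_of_gt hL0
    set r := -((α k).eval q1) / L with hr
    have hr0 : 0 ≤ r := div_nonneg (by linarith) hL0.le
    have hr1 : r ≤ 1 := by rw [hr, div_le_one hL0]; linarith
    refine ⟨(q1.1 + r*(q2.1 - q1.1), q1.2 + r*(q2.2 - q1.2)), ?_, ?_⟩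
    · rw [hstrip]
      have e1 := (hstrip q1).mp hq1
      have e2 := (hstrip q2).mp hq2
      have hcomb := (convex_Ioo m M) e1 e2 (by linarith : (0:ℝ) ≤ 1 - r) hr0 (by ring)
      have heq : f.eval (q1.1 + r*(q2.1-q1.1), q1.2 + r*(q2.2-q1.2))
          = (1-r) * f.eval q1 + r * f.eval q2 := by
        show f.a * _ + f.b * _ + f.c = _
        show f.a * (q1.1 + r*(q2.1-q1.1)) + f.b * (q1.2 + r*(q2.2-q1.2)) + f.c
          = (1-r) * (f.a * q1.1 + f.b * q1.2 + f.c) + r * (f.a * q2.1 + f.b * q2.2 + f.c)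
        ring
      rw [heq]
      simpa [smul_eq_mul] using hcomb
    · have heq : (α k).eval (q1.1 + r*(q2.1-q1.1), q1.2 + r*(q2.2-q1.2))
          = (α k).eval q1 + r * L := by
        rw [hL]
        show (α k).a * (q1.1 + r*(q2.1-q1.1)) + (α k).b * (q1.2 + r*(q2.2-q1.2)) + (α k).c
          = ((α k).a * q1.1 + (α k).b * q1.2 + (α k).c)
            + r * (((α k).a * q2.1 + (α k).b * q2.2 + (α k).c)
              - ((α k).a * q1.1 + (α k).b * q1.2 + (α k).c))
        ring
      rw [heq, hr]
      field_simp
      ring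
  have hparcase : ∀ k, (α k).Parallel f → ∀ p1 ∈ B, ∀ p2 ∈ B,
      (0 < (α k).eval p1 ↔ 0 < (α k).eval p2) := by
    intro k hk p1 hp1 p2 hp2
    have hline := hband k hk
    have hne1 : (α k).eval p1 ≠ 0 := by
      intro h0
      have hmem : p1 ∈ (α k).line ∩ B := ⟨h0, hp1⟩
      rw [hline] at hmem; exact hmem
    have hne2 : (α k).eval p2 ≠ 0 := by
      intro h0
      have hmem : p2 ∈ (α k).line ∩ B := ⟨h0, hp2⟩
      rw [hline] at hmem; exact hmem
    constructor
    · intro h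
      by_contra h2
      have hlt : (α k).eval p2 < 0 := lt_of_le_of_ne (not_lt.mp h2) hne2
      obtain ⟨p, hpB, hp0⟩ := hcross k p2 hp2 p1 hp1 hlt h
      have hmem : p ∈ (α k).line ∩ B := ⟨hp0, hpB⟩
      rw [hline] at hmem; exact hmem
    · intro h
      by_contra h2
      have hlt : (α k).eval p1 < 0 := lt_of_le_of_ne (not_lt.mp h2) hne1
      obtain ⟨p, hpB, hp0⟩ := hcross k p1 hp1 p2 hp2 hlt h
      have hmem : p ∈ (α k).line ∩ B := ⟨hp0, hpB⟩
      rw [hline] at hmem; exact hmem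
  -- unbounded chambers contain far points
  have hfar : ∀ U : Set Pt, U ⊆ B → ¬ Bornology.IsBounded U →
      ∃ p ∈ U, T ≤ tc p ∨ tc p ≤ -T := by
    intro U hUB hUub
    by_contra h
    push_neg at h
    apply hUub
    rw [isBounded_iff_forall_norm_le]
    refine ⟨(|f.a| + |f.b|) * (K + T) / N, ?_⟩
    intro x hx
    obtain ⟨h1, h2⟩ := h x hx
    have hux := hu x (hUB hx)
    have htx : |tc x| ≤ T := abs_le.mpr ⟨by linarith, by linarith⟩
    have hx1 : N * x.1 = f.a * (f.a*x.1+f.b*x.2) - f.b * (tc x) := by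
      simp only [htc, hNdef]; ring
    have hx2 : N * x.2 = f.b * (f.a*x.1+f.b*x.2) + f.a * (tc x) := by
      simp only [htc, hNdef]; ring
    have ea1 : |f.a * (f.a*x.1+f.b*x.2)| ≤ |f.a| * K := by
      rw [abs_mul]; exact mul_le_mul_of_nonneg_left hux (abs_nonneg _)
    have ea2 : |f.b * tc x| ≤ |f.b| * T := by
      rw [abs_mul]; exact mul_le_mul_of_nonneg_left htx (abs_nonneg _)
    have eb1 : |f.b * (f.a*x.1+f.b*x.2)| ≤ |f.b| * K := by
      rw [abs_mul]; exact mul_le_mul_of_nonneg_left hux (abs_nonneg _)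
    have eb2 : |f.a * tc x| ≤ |f.a| * T := by
      rw [abs_mul]; exact mul_le_mul_of_nonneg_left htx (abs_nonneg _)
    have e1 : |N * x.1| ≤ |f.a| * K + |f.b| * T := by
      rw [hx1]
      calc |f.a * (f.a*x.1+f.b*x.2) - f.b * tc x|
          ≤ |f.a * (f.a*x.1+f.b*x.2)| + |f.b * tc x| := abs_sub_le' _ _
        _ ≤ |f.a| * K + |f.b| * T := add_le_add ea1 ea2
    have e2 : |N * x.2| ≤ |f.b| * K + |f.a| * T := by
      rw [hx2]
      calc |f.b * (f.a*x.1+f.b*x.2) + f.a * tc x|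
          ≤ |f.b * (f.a*x.1+f.b*x.2)| + |f.a * tc x| := abs_add_le _ _
        _ ≤ |f.b| * K + |f.a| * T := add_le_add eb1 eb2
    have e1' : N * |x.1| ≤ |f.a| * K + |f.b| * T := by
      rw [← abs_of_pos hN, ← abs_mul]; exact e1
    have e2' : N * |x.2| ≤ |f.b| * K + |f.a| * T := by
      rw [← abs_of_pos hN, ← abs_mul]; exact e2
    have hb1 : |x.1| ≤ (|f.a| + |f.b|) * (K + T) / N := by
      rw [le_div_iff₀ hN]
      nlinarith [mul_nonneg (abs_nonneg f.a) hT0.le, mul_nonneg (abs_nonneg f.b) hK]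
    have hb2 : |x.2| ≤ (|f.a| + |f.b|) * (K + T) / N := by
      rw [le_div_iff₀ hN]
      nlinarith [mul_nonneg (abs_nonneg f.b) hT0.le, mul_nonneg (abs_nonneg f.a) hK]
    have hnx : ‖x‖ = max |x.1| |x.2| := by
      rw [Prod.norm_def, Real.norm_eq_abs, Real.norm_eq_abs]
    rw [hnx]
    exact max_le hb1 hb2
  -- convexity of B and of the ends
  have hBconv : Convex ℝ B := by
    have hBeq : B = {p : Pt | f.a * p.1 + f.b * p.2 + f.c ∈ Set.Ioo m M} :=
      Set.ext fun p => (hstrip p)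
    rw [hBeq]
    exact convex_aff_preimage _ _ _ (convex_Ioo m M)
  have hEconv : ∀ s : ℝ, Convex ℝ {p : Pt | p ∈ B ∧ T ≤ s * tc p} := by
    intro s x hx y hy a b ha hb hab
    refine ⟨hBconv hx.1 hy.1 ha hb hab, ?_⟩
    have c1 : (a • x + b • y).1 = a * x.1 + b * y.1 := rfl
    have c2 : (a • x + b • y).2 = a * x.2 + b * y.2 := rfl
    have hxy : s * tc (a • x + b • y) = a * (s * tc x) + b * (s * tc y) := by
      simp only [htc]
      rw [c1, c2]; ring
    have m1 : a * T ≤ a * (s * tc x) := mul_le_mul_of_nonneg_left hx.2 ha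
    have m2 : b * T ≤ b * (s * tc y) := mul_le_mul_of_nonneg_left hy.2 hb
    have hsum : a * T + b * T = T := by rw [← add_mul, hab, one_mul]
    rw [hxy]
    linarith
  -- the ends are inside the complement
  have hEcomp : ∀ s : ℝ, s = 1 ∨ s = -1 → ∀ p, p ∈ B → T ≤ s * tc p →
      p ∈ complement α := by
    intro s hs p hpB ht k
    by_cases hdk : d k = 0
    · have hk := hd_par k hdk
      have hline := hband k hk
      intro h0
      have hmem : p ∈ (α k).line ∩ B := ⟨h0, hpB⟩
      rw [hline] at hmem; exact hmem
    · rcases hs with rfl | rfl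
      · have hsg := hsignP k p hpB hdk (by linarith)
        rcases lt_or_gt_of_ne hdk with hdlt | hdgt
        · exact ne_of_lt (hsg.2 hdlt)
        · exact ne_of_gt (hsg.1 hdgt)
      · have hsg := hsignN k p hpB hdk (by linarith)
        rcases lt_or_gt_of_ne hdk with hdlt | hdgt
        · exact ne_of_gt (hsg.2 hdlt)
        · exact ne_of_lt (hsg.1 hdgt)
  -- an end is contained in any chamber meeting it
  have hEsub : ∀ s : ℝ, s = 1 ∨ s = -1 → ∀ U : Set Pt, IsChamber α U →
      ∀ p, p ∈ U → p ∈ B → T ≤ s * tc p → {q : Pt | q ∈ B ∧ T ≤ s * tc q} ⊆ U := by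
    intro s hs U hU p hpU hpB hpt
    obtain ⟨q0, hq0, rfl⟩ := hU
    have hE : IsPreconnected {q : Pt | q ∈ B ∧ T ≤ s * tc q} := (hEconv s).isPreconnected
    have hsubc : {q : Pt | q ∈ B ∧ T ≤ s * tc q} ⊆ complement α :=
      fun q hq => hEcomp s hs q hq.1 hq.2
    have h1 : {q : Pt | q ∈ B ∧ T ≤ s * tc q} ⊆ connectedComponentIn (complement α) p :=
      hE.subset_connectedComponentIn ⟨hpB, hpt⟩ hsubc
    rw [connectedComponentIn_eq hpU]
    exact h1
  have hchambereq : ∀ U V : Set Pt, IsChamber α U → IsChamber α V →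
      ∀ p, p ∈ U → p ∈ V → U = V := by
    intro U V hU hV p hpU hpV
    obtain ⟨u0, hu0, rfl⟩ := hU
    obtain ⟨v0, hv0, rfl⟩ := hV
    rw [connectedComponentIn_eq hpU, connectedComponentIn_eq hpV]
  -- transverse lines always separate U1 and U2
  have htrans : ∀ k, d k ≠ 0 →
      ((∀ p ∈ U1, 0 < (α k).eval p) ↔ (∀ p ∈ U2, 0 < (α k).eval p)) → False := by
    intro k hdk hiff
    obtain ⟨p1, hp1U, hp1t⟩ := hfar U1 hU1B hU1ub
    obtain ⟨p2, hp2U, hp2t⟩ := hfar U2 hU2B hU2ub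
    have hp1B := hU1B hp1U
    have hp2B := hU2B hp2U
    have hsame : ∀ s : ℝ, s = 1 ∨ s = -1 → T ≤ s * tc p1 → T ≤ s * tc p2 → False := by
      intro s hs h1 h2
      have hsub2 := hEsub s hs U2 hU2 p2 hp2U hp2B h2
      exact hU12 (hchambereq U1 U2 hU1 hU2 p1 hp1U (hsub2 ⟨hp1B, h1⟩))
    rcases hp1t with h1 | h1 <;> rcases hp2t with h2 | h2
    · exact hsame 1 (Or.inl rfl) (by linarith) (by linarith)
    · have s1 := hsignP k p1 hp1B hdk h1
      have s2 := hsignN k p2 hp2B hdk h2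
      rcases lt_or_gt_of_ne hdk with hd' | hd'
      · have e1 := s1.2 hd'
        have e2 := s2.2 hd'
        have hpos2 : ∀ p ∈ U2, 0 < (α k).eval p := by
          rcases chamber_sign hU2 k with hh | hh
          · exact hh
          · exact absurd (hh p2 hp2U) (by linarith)
        have := hiff.mpr hpos2 p1 hp1U
        linarith
      · have e1 := s1.1 hd'
        have e2 := s2.1 hd'
        have hpos1 : ∀ p ∈ U1, 0 < (α k).eval p := by
          rcases chamber_sign hU1 k with hh | hh
          · exact hh
          · exact absurd (hh p1 hp1U) (by linarith)
        have := hiff.mp hpos1 p2 hp2U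
        linarith
    · have s1 := hsignN k p1 hp1B hdk h1
      have s2 := hsignP k p2 hp2B hdk h2
      rcases lt_or_gt_of_ne hdk with hd' | hd'
      · have e1 := s1.2 hd'
        have e2 := s2.2 hd'
        have hpos1 : ∀ p ∈ U1, 0 < (α k).eval p := by
          rcases chamber_sign hU1 k with hh | hh
          · exact hh
          · exact absurd (hh p1 hp1U) (by linarith)
        have := hiff.mp hpos1 p2 hp2U
        linarith
      · have e1 := s1.1 hd'
        have e2 := s2.1 hd'
        have hpos2 : ∀ p ∈ U2, 0 < (α k).eval p := by
          rcases chamber_sign hU2 k with hh | hh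
          · exact hh
          · exact absurd (hh p2 hp2U) (by linarith)
        have := hiff.mpr hpos2 p1 hp1U
        linarith
    · exact hsame (-1) (Or.inr rfl) (by linarith) (by linarith)
  -- the key lemma
  have key : ∀ k : Fin n,
      ((∀ p ∈ U1, 0 < (α k).eval p) ↔ (∀ p ∈ U2, 0 < (α k).eval p)) →
      ((∀ p ∈ U1, 0 < (α k).eval p) ↔ (∀ p ∈ C, 0 < (α k).eval p)) := by
    intro k h
    by_cases hdk : d k = 0
    · obtain ⟨pU, hpU⟩ := chamber_nonempty hU1
      obtain ⟨pC, hpC⟩ := chamber_nonempty hC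
      have hiff := hparcase k (hd_par k hdk) pU (hU1B hpU) pC (hCB hpC)
      rcases chamber_sign hU1 k with h1 | h1 <;> rcases chamber_sign hC k with h2 | h2
      · exact iff_of_true h1 h2
      · exact absurd (hiff.mp (h1 pU hpU)) (by linarith [h2 pC hpC])
      · exact absurd (hiff.mpr (h2 pC hpC)) (by linarith [h1 pU hpU])
      · exact iff_of_false (fun hP => by linarith [hP pU hpU, h1 pU hpU])
          (fun hP => by linarith [hP pC hpC, h2 pC hpC])
    · exact absurd h (fun h' => htrans k hdk h')
  -- finish
  have hnegU1 := chamber_neg_iff hU1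
  have hnegU2 := chamber_neg_iff hU2
  have hnegC := chamber_neg_iff hC
  constructor
  · rw [Finset.disjoint_left]
    intro k hk1 hk2
    simp only [SepSet, Finset.mem_filter, Finset.mem_univ, true_and] at hk1 hk2
    rw [hnegU1 k, hnegC k] at hk1
    rw [hnegU2 k, hnegC k] at hk2
    have hk := key k
    tauto
  · ext k
    simp only [Finset.mem_union, SepSet, Finset.mem_filter, Finset.mem_univ, true_and]
    rw [hnegU1 k, hnegU2 k, hnegC k]
    have hk := key k
    tauto


end
end

section
/- Let B be a resonant band of A and set δ := ∏_{H_i ∈ Sep(U_1(B),U_2(B))} r_i. Then δ = 1 or δ = −1, for every chamber C ⊆ B one has Δ(U_1(B), C) = −δ·Δ(U_2(B), C), and consequently ∇_1(B) = −δ·∇_2(B); in particular ∇_2(B) = ±∇_1(B). -/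
open scoped Classical

noncomputable section

variable {n : ℕ}

/-- `U1, U2` assign to each band its two unbounded chambers (one at each end). -/
def GoodLabel (α : Fin n → AffForm) (U1 U2 : Set Pt → Set Pt) : Prop :=
  ∀ B : Set Pt, IsBand α B →
    IsChamber α (U1 B) ∧ IsChamber α (U2 B) ∧ U1 B ⊆ B ∧ U2 B ⊆ B ∧
    ¬ Bornology.IsBounded (U1 B) ∧ ¬ Bornology.IsBounded (U2 B) ∧ U1 B ≠ U2 B

/-- The standing wave `∇(B) = Σ_{C ⊆ B} Δ(U, C)·[C]` (relative to the unbounded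
chamber `U` of `B`), an element of `ℂ[ch(A)]`. -/
def wave (α : Fin n → AffForm) (chambers : Finset (Set Pt)) (r : Fin n → ℂ)
    (U B : Set Pt) : Set Pt →₀ ℂ :=
  ∑ C ∈ chambers.filter (fun C => C ⊆ B), Finsupp.single C (Delta α r U C)

/-- The set `RB(A)` of resonant bands (a band `B` is resonant if `Δ(U_1(B), U_2(B)) = 0`). -/
abbrev RBt (α : Fin n → AffForm) (r : Fin n → ℂ) (U1 U2 : Set Pt → Set Pt) : Type :=
  {B : Set Pt // IsBand α B ∧ Delta α r (U1 B) (U2 B) = 0}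

/-- The linear map `∇ : ℂ[RB(A)] → ℂ[ch(A)]` extending `B ↦ ∇(B)`. -/
def nabla (α : Fin n → AffForm) (chambers : Finset (Set Pt)) (r : Fin n → ℂ)
    (U1 U2 : Set Pt → Set Pt) :
    (RBt α r U1 U2 →₀ ℂ) →ₗ[ℂ] (Set Pt →₀ ℂ) :=
  Finsupp.linearCombination ℂ fun B : RBt α r U1 U2 => wave α chambers r (U1 B.1) B.1

namespace S3aux

def sfun (f : AffForm) (p : Pt) : ℝ := f.b * p.1 - f.a * p.2

def lamd (f g : AffForm) : ℝ := g.a * f.b - g.b * f.a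

def bnd (f g : AffForm) (M' : ℝ) : ℝ :=
  |g.a * f.a + g.b * f.b| * M' + (f.a ^ 2 + f.b ^ 2) * |g.c|

lemma D_pos (f : AffForm) : 0 < f.a ^ 2 + f.b ^ 2 := by
  rcases f.nondeg with h | h
  · nlinarith [sq_nonneg f.b, sq_nonneg f.a, pow_two_pos_of_ne_zero h]
  · nlinarith [sq_nonneg f.a, pow_two_pos_of_ne_zero h]

lemma cont_eval (f : AffForm) : Continuous f.eval := by
  unfold AffForm.eval; fun_prop

lemma line_nonempty (f : AffForm) : ∃ q : Pt, q ∈ f.line := by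
  rcases f.nondeg with h | h
  · refine ⟨(-f.c / f.a, 0), ?_⟩
    show f.eval (-f.c / f.a, 0) = 0
    simp only [AffForm.eval]
    field_simp
    ring
  · refine ⟨(0, -f.c / f.b), ?_⟩
    show f.eval (0, -f.c / f.b) = 0
    simp only [AffForm.eval]
    field_simp
    ring

lemma eval_decomp (f g : AffForm) (p : Pt) :
    (f.a ^ 2 + f.b ^ 2) * g.eval p =
      (g.a * f.a + g.b * f.b) * (f.eval p - f.c) + lamd f g * sfun f p
        + (f.a ^ 2 + f.b ^ 2) * g.c := by
  simp only [AffForm.eval, lamd, sfun]; ring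

lemma coord1 (f : AffForm) (p : Pt) :
    (f.a ^ 2 + f.b ^ 2) * p.1 = f.a * (f.eval p - f.c) + f.b * sfun f p := by
  simp only [AffForm.eval, sfun]; ring

lemma coord2 (f : AffForm) (p : Pt) :
    (f.a ^ 2 + f.b ^ 2) * p.2 = f.b * (f.eval p - f.c) + (-f.a) * sfun f p := by
  simp only [AffForm.eval, sfun]; ring

lemma combo_pos {s t a b : ℝ} (hs : 0 ≤ s) (ht : 0 ≤ t) (hst : s + t = 1)
    (ha : 0 < a) (hb : 0 < b) : 0 < s * a + t * b := by
  rcases hs.lt_or_eq with h | h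
  · nlinarith [mul_nonneg ht hb.le, mul_pos h ha]
  · nlinarith

lemma convex_halfplane (c1 c2 T : ℝ) : Convex ℝ {p : Pt | T < c1 * p.1 + c2 * p.2} := by
  intro p hp q hq u v hu hv huv
  simp only [Set.mem_setOf_eq, Prod.fst_add, Prod.snd_add, Prod.smul_fst, Prod.smul_snd,
    smul_eq_mul] at *
  have h1 : 0 < u * (c1 * p.1 + c2 * p.2 - T) + v * (c1 * q.1 + c2 * q.2 - T) :=
    combo_pos hu hv huv (by linarith) (by linarith)
  have hT : u * T + v * T = T := by linear_combination T * huv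
  linarith

lemma convex_strip (f g : AffForm) : Convex ℝ (Strip f g) := by
  intro p hp q hq u v hu hv huv
  intro z hz
  have hp' := hp z hz
  have hq' := hq z hz
  have he : f.eval (u • p + v • q) = u * f.eval p + v * f.eval q := by
    simp only [AffForm.eval, Prod.fst_add, Prod.snd_add, Prod.smul_fst, Prod.smul_snd,
      smul_eq_mul]
    linear_combination (-f.c) * huv
  have hz1 : u * f.eval z + v * f.eval z = f.eval z := by
    linear_combination f.eval z * huv
  rcases hp' with ⟨h1, h2⟩ | ⟨h1, h2⟩ <;> rcases hq' with ⟨h3, h4⟩ | ⟨h3, h4⟩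
  · refine Or.inl ⟨?_, ?_⟩
    · rw [he]; exact combo_pos hu hv huv h1 h3
    · rw [he]
      have := combo_pos hu hv huv (sub_pos.mpr h2) (sub_pos.mpr h4)
      linarith
  · exfalso; linarith
  · exfalso; linarith
  · refine Or.inr ⟨?_, ?_⟩
    · rw [he]
      have := combo_pos hu hv huv (sub_pos.mpr h1) (sub_pos.mpr h3)
      linarith
    · rw [he]
      have := combo_pos hu hv huv (neg_pos.mpr h2) (neg_pos.mpr h4)
      linarith

lemma exists_zero {T : Set Pt} (hT : IsPreconnected T) (f : AffForm) {x y : Pt}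
    (hx : x ∈ T) (hy : y ∈ T) (hx0 : f.eval x < 0) (hy0 : 0 < f.eval y) :
    ∃ z ∈ T, f.eval z = 0 := by
  have h := hT.intermediate_value hx hy (cont_eval f).continuousOn
  obtain ⟨z, hz, hz0⟩ := h ⟨hx0.le, hy0.le⟩
  exact ⟨z, hz, hz0⟩

lemma sign_const {T : Set Pt} (hT : IsPreconnected T) (f : AffForm)
    (hne : ∀ p ∈ T, f.eval p ≠ 0) :
    (∀ p ∈ T, 0 < f.eval p) ∨ (∀ p ∈ T, f.eval p < 0) := by
  by_contra h
  push_neg at h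
  obtain ⟨⟨x, hx, hx0⟩, ⟨y, hy, hy0⟩⟩ := h
  have hx' : f.eval x < 0 := lt_of_le_of_ne hx0 (hne x hx)
  have hy' : 0 < f.eval y := lt_of_le_of_ne (by linarith [hy0]) (Ne.symm (hne y hy))
  obtain ⟨z, hz, hz0⟩ := exists_zero hT f hx hy hx' hy'
  exact hne z hz hz0

lemma chamber_nonempty {n : ℕ} {α : Fin n → AffForm} {C : Set Pt} (hC : IsChamber α C) :
    ∃ x, x ∈ C := by
  obtain ⟨p, hp, rfl⟩ := hC
  exact ⟨p, mem_connectedComponentIn hp⟩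

lemma chamber_subset {n : ℕ} {α : Fin n → AffForm} {C : Set Pt} (hC : IsChamber α C) :
    C ⊆ complement α := by
  obtain ⟨p, hp, rfl⟩ := hC
  exact connectedComponentIn_subset _ _

lemma chamber_eq_of_mem {n : ℕ} {α : Fin n → AffForm} {C : Set Pt} {x : Pt}
    (hC : IsChamber α C) (hx : x ∈ C) :
    C = connectedComponentIn (complement α) x := by
  obtain ⟨p, hp, rfl⟩ := hC
  exact connectedComponentIn_eq hx

lemma chamber_sign {n : ℕ} {α : Fin n → AffForm} {C : Set Pt} (hC : IsChamber α C)
    (k : Fin n) :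
    (∀ p ∈ C, 0 < (α k).eval p) ∨ (∀ p ∈ C, (α k).eval p < 0) := by
  obtain ⟨x, hxmem, rfl⟩ := hC
  exact sign_const isPreconnected_connectedComponentIn (α k)
    (fun p hp => (connectedComponentIn_subset _ _ hp) k)

end S3aux

namespace S3aux

lemma exists_big_s (f : AffForm) {U B' : Set Pt} {M' : ℝ}
    (hF' : ∀ p ∈ B', |f.eval p - f.c| ≤ M') (hUB : U ⊆ B')
    (hnb : ¬ Bornology.IsBounded U) (T : ℝ) : ∃ p ∈ U, T < |sfun f p| := by
  have hD : 0 < f.a ^ 2 + f.b ^ 2 := D_pos f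
  have hK : 0 < |f.a| + |f.b| := by
    rcases f.nondeg with h | h
    · exact add_pos_of_pos_of_nonneg (abs_pos.mpr h) (abs_nonneg _)
    · exact add_pos_of_nonneg_of_pos (abs_nonneg _) (abs_pos.mpr h)
  rw [isBounded_iff_forall_norm_le] at hnb
  push_neg at hnb
  obtain ⟨p, hpU, hpn⟩ :=
    hnb ((|f.a| + |f.b|) * (M' + T) / (f.a ^ 2 + f.b ^ 2))
  refine ⟨p, hpU, ?_⟩
  have hFb := hF' p (hUB hpU)
  have hM'0 : 0 ≤ M' := le_trans (abs_nonneg _) hFb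
  have key : ∀ x u v : ℝ,
      (f.a ^ 2 + f.b ^ 2) * x = u * (f.eval p - f.c) + v * sfun f p →
      |u| ≤ |f.a| + |f.b| → |v| ≤ |f.a| + |f.b| →
      (f.a ^ 2 + f.b ^ 2) * |x| ≤ (|f.a| + |f.b|) * (M' + |sfun f p|) := by
    intro x u v hx hu hv
    have h1' : |(f.a ^ 2 + f.b ^ 2) * x| ≤ |u| * |f.eval p - f.c| + |v| * |sfun f p| := by
      rw [hx]
      refine (abs_add_le _ _).trans ?_
      rw [abs_mul, abs_mul]
    rw [abs_mul, abs_of_pos hD] at h1'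
    nlinarith [abs_nonneg (sfun f p), abs_nonneg u, abs_nonneg v, hFb,
      abs_nonneg (f.eval p - f.c)]
  have hKa : |f.a| ≤ |f.a| + |f.b| := le_add_of_nonneg_right (abs_nonneg _)
  have hKb : |f.b| ≤ |f.a| + |f.b| := le_add_of_nonneg_left (abs_nonneg _)
  have hb1 := key p.1 f.a f.b (coord1 f p) hKa hKb
  have hb2 := key p.2 f.b (-f.a) (coord2 f p) hKb (by rw [abs_neg]; exact hKa)
  have hnorm : ‖p‖ = max |p.1| |p.2| := by
    rw [Prod.norm_def, Real.norm_eq_abs, Real.norm_eq_abs]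
  have hD' : (f.a ^ 2 + f.b ^ 2) * ‖p‖ ≤ (|f.a| + |f.b|) * (M' + |sfun f p|) := by
    rcases max_choice |p.1| |p.2| with h | h <;> rw [hnorm, h]
    · exact hb1
    · exact hb2
  have h5 : (|f.a| + |f.b|) * (M' + T) < (f.a ^ 2 + f.b ^ 2) * ‖p‖ := by
    have := (div_lt_iff₀ hD).mp hpn
    linarith
  have h6 : (|f.a| + |f.b|) * T < (|f.a| + |f.b|) * |sfun f p| := by nlinarith
  exact lt_of_mul_lt_mul_left h6 hK.le

lemma not_separating {n : ℕ} (α : Fin n → AffForm) (i j : Fin n) (B U1 U2 : Set Pt)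
    (hB : BandData α i j B U1 U2)
    (C : Set Pt) (hC : IsChamber α C) (hCB : C ⊆ B) (c : Pt) (hc : c ∈ C)
    (k : Fin n) (ε : ℝ) (hε : ε = 1 ∨ ε = -1)
    (h1 : ∀ p ∈ U1, 0 < ε * (α k).eval p)
    (h2 : ∀ p ∈ U2, 0 < ε * (α k).eval p)
    (hcneg : ε * (α k).eval c < 0) : False := by
  obtain ⟨hij, hpar, hBeq, hclear, hU1, hU2, hU1B, hU2B, hUb1, hUb2, hne12⟩ := hB
  have hεabs : |ε| = 1 := by rcases hε with rfl | rfl <;> simp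
  have hε0 : ε ≠ 0 := by rcases hε with rfl | rfl <;> norm_num
  have hD := D_pos (α i)
  have hconvB : Convex ℝ B := by rw [hBeq]; exact convex_strip (α i) (α j)
  obtain ⟨q0, hq0⟩ := line_nonempty (α j)
  set M' : ℝ := |(α i).eval q0| + |(α i).c| with hM'def
  have hM'0 : 0 ≤ M' := by positivity
  have hF' : ∀ p ∈ B, |(α i).eval p - (α i).c| ≤ M' := by
    intro p hp
    have hb : |(α i).eval p| ≤ |(α i).eval q0| := by
      rw [hBeq] at hp
      rcases hp q0 hq0 with ⟨ha1, ha2⟩ | ⟨ha1, ha2⟩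
      · rw [abs_of_pos ha1]; exact ha2.le.trans (le_abs_self _)
      · rw [abs_of_neg ha2]
        have := neg_le_abs ((α i).eval q0)
        linarith
    have habs : |(α i).eval p - (α i).c| ≤ |(α i).eval p| + |(α i).c| := by
      rw [sub_eq_add_neg]
      exact (abs_add_le _ _).trans_eq (by rw [abs_neg])
    rw [hM'def]
    linarith
  -- clear-of-lines bound
  have hclearS : ∃ S0 : ℝ, ∀ p ∈ B, S0 < |sfun (α i) p| → p ∈ complement α := by
    refine ⟨∑ k' : Fin n, max 0 (if lamd (α i) (α k') = 0 then 0
      else bnd (α i) (α k') M' / |lamd (α i) (α k')|), ?_⟩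
    intro p hp hsp k'
    intro h0
    by_cases hl : lamd (α i) (α k') = 0
    · have hparr : (α k').Parallel (α i) := sub_eq_zero.mp hl
      have hemp := hclear k' hparr
      have hmem : p ∈ (α k').line ∩ B := ⟨h0, hp⟩
      rw [hemp] at hmem
      exact hmem
    · have hid := eval_decomp (α i) (α k') p
      rw [h0, mul_zero] at hid
      have heq : lamd (α i) (α k') * sfun (α i) p =
          -(((α k').a * (α i).a + (α k').b * (α i).b) * ((α i).eval p - (α i).c)
            + ((α i).a ^ 2 + (α i).b ^ 2) * (α k').c) := by linarith
      have habs : |lamd (α i) (α k')| * |sfun (α i) p| ≤ bnd (α i) (α k') M' := by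
        rw [← abs_mul, heq, abs_neg]
        refine (abs_add_le _ _).trans ?_
        unfold bnd
        refine add_le_add ?_ ?_
        · rw [abs_mul]
          exact mul_le_mul_of_nonneg_left (hF' p hp) (abs_nonneg _)
        · rw [abs_mul, abs_of_pos (D_pos (α i))]
      have hle : |sfun (α i) p| ≤ bnd (α i) (α k') M' / |lamd (α i) (α k')| := by
        rw [le_div_iff₀ (abs_pos.mpr hl)]
        linarith
      have hsum : bnd (α i) (α k') M' / |lamd (α i) (α k')| ≤
          ∑ k' : Fin n, max 0 (if lamd (α i) (α k') = 0 then 0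
            else bnd (α i) (α k') M' / |lamd (α i) (α k')|) := by
        have h1' : bnd (α i) (α k') M' / |lamd (α i) (α k')| ≤
            max 0 (if lamd (α i) (α k') = 0 then 0
              else bnd (α i) (α k') M' / |lamd (α i) (α k')|) := by
          rw [if_neg hl]; exact le_max_right _ _
        exact h1'.trans (Finset.single_le_sum
          (f := fun k' : Fin n => max 0 (if lamd (α i) (α k') = 0 then 0
            else bnd (α i) (α k') M' / |lamd (α i) (α k')|))
          (fun _ _ => le_max_left _ _) (Finset.mem_univ k'))
      linarith
  obtain ⟨S0, hS0⟩ := hclearS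
  obtain ⟨x1, hx1⟩ := chamber_nonempty hU1
  have hx1B : x1 ∈ B := hU1B hx1
  have hcB : c ∈ B := hCB hc
  -- k is transversal
  have hlamk : lamd (α i) (α k) ≠ 0 := by
    intro hl
    have hparr : (α k).Parallel (α i) := sub_eq_zero.mp hl
    have hemp := hclear k hparr
    have henz : ∃ z ∈ B, (α k).eval z = 0 := by
      rcases hε with rfl | rfl
      · have hcn : (α k).eval c < 0 := by linarith [hcneg]
        have hxp : 0 < (α k).eval x1 := by linarith [h1 x1 hx1]
        exact exists_zero hconvB.isPreconnected (α k) hcB hx1B hcn hxp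
      · have hxn : (α k).eval x1 < 0 := by linarith [h1 x1 hx1]
        have hcp : 0 < (α k).eval c := by linarith [hcneg]
        exact exists_zero hconvB.isPreconnected (α k) hx1B hcB hxn hcp
    obtain ⟨z, hzB, hz0⟩ := henz
    have hmem : z ∈ (α k).line ∩ B := ⟨hz0, hzB⟩
    rw [hemp] at hmem
    exact hmem
  obtain ⟨σ, hσ1, hσL⟩ : ∃ σ : ℝ, (σ = 1 ∨ σ = -1) ∧
      0 < σ * (ε * lamd (α i) (α k)) := by
    rcases lt_trichotomy (ε * lamd (α i) (α k)) 0 with h | h | h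
    · exact ⟨-1, Or.inr rfl, by linarith⟩
    · exact absurd h (mul_ne_zero hε0 hlamk)
    · exact ⟨1, Or.inl rfl, by linarith⟩
  have hMk0 : 0 ≤ bnd (α i) (α k) M' := by
    unfold bnd
    exact add_nonneg (mul_nonneg (abs_nonneg _) hM'0)
      (mul_nonneg hD.le (abs_nonneg _))
  -- one-sided bound on the s-coordinate
  have hside : ∀ p ∈ B, 0 < ε * (α k).eval p →
      -(bnd (α i) (α k) M' / (σ * (ε * lamd (α i) (α k)))) ≤ σ * sfun (α i) p := by
    intro p hp hpe
    have hid := eval_decomp (α i) (α k) p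
    have hid2 : (ε * lamd (α i) (α k)) * sfun (α i) p =
        ((α i).a ^ 2 + (α i).b ^ 2) * (ε * (α k).eval p)
          - ε * (((α k).a * (α i).a + (α k).b * (α i).b) * ((α i).eval p - (α i).c))
          - ε * (((α i).a ^ 2 + (α i).b ^ 2) * (α k).c) := by
      linear_combination (-ε) * hid
    have e1 : |ε * (((α k).a * (α i).a + (α k).b * (α i).b) * ((α i).eval p - (α i).c))|
        ≤ |(α k).a * (α i).a + (α k).b * (α i).b| * M' := by
      rw [abs_mul, hεabs, one_mul, abs_mul]
      exact mul_le_mul_of_nonneg_left (hF' p hp) (abs_nonneg _)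
    have e2 : |ε * (((α i).a ^ 2 + (α i).b ^ 2) * (α k).c)| =
        ((α i).a ^ 2 + (α i).b ^ 2) * |(α k).c| := by
      rw [abs_mul, hεabs, one_mul, abs_mul, abs_of_pos hD]
    have e3 : 0 < ((α i).a ^ 2 + (α i).b ^ 2) * (ε * (α k).eval p) := mul_pos hD hpe
    have hlow : -(bnd (α i) (α k) M') ≤ (ε * lamd (α i) (α k)) * sfun (α i) p := by
      have l2 := le_abs_self
        (ε * (((α k).a * (α i).a + (α k).b * (α i).b) * ((α i).eval p - (α i).c)))
      have l3 := le_abs_self (ε * (((α i).a ^ 2 + (α i).b ^ 2) * (α k).c))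
      unfold bnd
      linarith
    rw [← neg_div, div_le_iff₀ hσL]
    rcases hσ1 with rfl | rfl <;> nlinarith [hlow]
  -- assemble
  have hm0 : 0 ≤ bnd (α i) (α k) M' / (σ * (ε * lamd (α i) (α k))) :=
    div_nonneg hMk0 hσL.le
  set T := max S0 (bnd (α i) (α k) M' / (σ * (ε * lamd (α i) (α k)))) with hTdef
  obtain ⟨p1, hp1, hs1⟩ := exists_big_s (α i) hF' hU1B hUb1 T
  obtain ⟨p2, hp2, hs2⟩ := exists_big_s (α i) hF' hU2B hUb2 T
  have habsσ : ∀ x : ℝ, |σ * x| = |x| := by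
    rcases hσ1 with rfl | rfl <;> intro x <;> simp
  have hgt : ∀ p : Pt, p ∈ B → 0 < ε * (α k).eval p → T < |sfun (α i) p| →
      T < σ * sfun (α i) p := by
    intro p hp hpe hps
    have hsd := hside p hp hpe
    have habs' := habsσ (sfun (α i) p)
    have hmT := le_max_right S0 (bnd (α i) (α k) M' / (σ * (ε * lamd (α i) (α k))))
    rcases abs_cases (σ * sfun (α i) p) with ⟨h, _⟩ | ⟨h, _⟩
    · linarith
    · linarith
  have hgt1 : T < σ * sfun (α i) p1 := hgt p1 (hU1B hp1) (h1 p1 hp1) hs1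
  have hgt2 : T < σ * sfun (α i) p2 := hgt p2 (hU2B hp2) (h2 p2 hp2) hs2
  have hWconv : Convex ℝ (B ∩ {p : Pt | T < σ * sfun (α i) p}) := by
    refine hconvB.inter ?_
    have hset : {p : Pt | T < σ * sfun (α i) p} =
        {p : Pt | T < (σ * (α i).b) * p.1 + (-(σ * (α i).a)) * p.2} := by
      ext p
      simp only [Set.mem_setOf_eq, sfun]
      constructor <;> intro h <;> nlinarith [h]
    rw [hset]
    exact convex_halfplane _ _ _
  have hWsub : (B ∩ {p : Pt | T < σ * sfun (α i) p}) ⊆ complement α := by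
    rintro p ⟨hpB, hps⟩
    refine hS0 p hpB ?_
    have habs' := habsσ (sfun (α i) p)
    have h2' := le_abs_self (σ * sfun (α i) p)
    have hS0T := le_max_left S0 (bnd (α i) (α k) M' / (σ * (ε * lamd (α i) (α k))))
    simp only [Set.mem_setOf_eq] at hps
    linarith
  have hp1W : p1 ∈ B ∩ {p : Pt | T < σ * sfun (α i) p} := ⟨hU1B hp1, hgt1⟩
  have hp2W : p2 ∈ B ∩ {p : Pt | T < σ * sfun (α i) p} := ⟨hU2B hp2, hgt2⟩
  have hU1eq : U1 = connectedComponentIn (complement α) p1 := chamber_eq_of_mem hU1 hp1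
  have hWc : (B ∩ {p : Pt | T < σ * sfun (α i) p}) ⊆
      connectedComponentIn (complement α) p1 :=
    hWconv.isPreconnected.subset_connectedComponentIn hp1W hWsub
  have hp2U1 : p2 ∈ U1 := by rw [hU1eq]; exact hWc hp2W
  exact hne12 ((chamber_eq_of_mem hU1 hp2U1).trans (chamber_eq_of_mem hU2 hp2).symm)

end S3aux

namespace S3aux

lemma mem_SepSet_iff {n : ℕ} {α : Fin n → AffForm} {C C' : Set Pt}
    (hC : IsChamber α C) (hC' : IsChamber α C') {x y : Pt} (hx : x ∈ C) (hy : y ∈ C')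
    (k : Fin n) :
    k ∈ SepSet α C C' ↔
      ((0 < (α k).eval x ∧ (α k).eval y < 0) ∨ ((α k).eval x < 0 ∧ 0 < (α k).eval y)) := by
  simp only [SepSet, Finset.mem_filter, Finset.mem_univ, true_and]
  constructor
  · rintro (⟨ha, hb⟩ | ⟨ha, hb⟩)
    · exact Or.inl ⟨ha x hx, hb y hy⟩
    · exact Or.inr ⟨ha x hx, hb y hy⟩
  · rintro (⟨ha, hb⟩ | ⟨ha, hb⟩)
    · refine Or.inl ⟨?_, ?_⟩
      · exact (chamber_sign hC k).resolve_right (fun h => (not_lt.mpr ha.le) (h x hx))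
      · exact (chamber_sign hC' k).resolve_left (fun h => (not_lt.mpr hb.le) (h y hy))
    · refine Or.inr ⟨?_, ?_⟩
      · exact (chamber_sign hC k).resolve_left (fun h => (not_lt.mpr ha.le) (h x hx))
      · exact (chamber_sign hC' k).resolve_right (fun h => (not_lt.mpr hb.le) (h y hy))

lemma sep_union_disjoint {n : ℕ} (α : Fin n → AffForm) (i j : Fin n) (B U1 U2 : Set Pt)
    (hB : BandData α i j B U1 U2) (C : Set Pt) (hC : IsChamber α C) (hCB : C ⊆ B) :
    SepSet α U1 U2 = SepSet α U1 C ∪ SepSet α U2 C ∧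
      Disjoint (SepSet α U1 C) (SepSet α U2 C) := by
  have hU1 : IsChamber α U1 := hB.2.2.2.2.1
  have hU2 : IsChamber α U2 := hB.2.2.2.2.2.1
  obtain ⟨x1, hx1⟩ := chamber_nonempty hU1
  obtain ⟨x2, hx2⟩ := chamber_nonempty hU2
  obtain ⟨c, hc⟩ := chamber_nonempty hC
  have hnz1 : ∀ k : Fin n, (α k).eval x1 ≠ 0 := fun k => (chamber_subset hU1 hx1) k
  have hnz2 : ∀ k : Fin n, (α k).eval x2 ≠ 0 := fun k => (chamber_subset hU2 hx2) k
  have hnzc : ∀ k : Fin n, (α k).eval c ≠ 0 := fun k => (chamber_subset hC hc) k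
  have forb : ∀ k : Fin n,
      ¬ (0 < (α k).eval x1 ∧ 0 < (α k).eval x2 ∧ (α k).eval c < 0) := by
    rintro k ⟨ha, hb, hcc⟩
    have u1 : ∀ p ∈ U1, 0 < (α k).eval p :=
      (chamber_sign hU1 k).resolve_right (fun h => (not_lt.mpr ha.le) (h x1 hx1))
    have u2 : ∀ p ∈ U2, 0 < (α k).eval p :=
      (chamber_sign hU2 k).resolve_right (fun h => (not_lt.mpr hb.le) (h x2 hx2))
    exact not_separating α i j B U1 U2 hB C hC hCB c hc k 1 (Or.inl rfl)
      (fun p hp => by rw [one_mul]; exact u1 p hp)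
      (fun p hp => by rw [one_mul]; exact u2 p hp)
      (by rw [one_mul]; exact hcc)
  have forb' : ∀ k : Fin n,
      ¬ ((α k).eval x1 < 0 ∧ (α k).eval x2 < 0 ∧ 0 < (α k).eval c) := by
    rintro k ⟨ha, hb, hcc⟩
    have u1 : ∀ p ∈ U1, (α k).eval p < 0 :=
      (chamber_sign hU1 k).resolve_left (fun h => (not_lt.mpr ha.le) (h x1 hx1))
    have u2 : ∀ p ∈ U2, (α k).eval p < 0 :=
      (chamber_sign hU2 k).resolve_left (fun h => (not_lt.mpr hb.le) (h x2 hx2))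
    refine not_separating α i j B U1 U2 hB C hC hCB c hc k (-1) (Or.inr rfl) ?_ ?_ ?_
    · intro p hp; have := u1 p hp; linarith
    · intro p hp; have := u2 p hp; linarith
    · linarith
  constructor
  · ext k
    rw [mem_SepSet_iff hU1 hU2 hx1 hx2, Finset.mem_union,
      mem_SepSet_iff hU1 hC hx1 hc, mem_SepSet_iff hU2 hC hx2 hc]
    constructor
    · rintro (⟨ha, hb⟩ | ⟨ha, hb⟩)
      · rcases (hnzc k).lt_or_gt with hcc | hcc
        · exact Or.inl (Or.inl ⟨ha, hcc⟩)
        · exact Or.inr (Or.inr ⟨hb, hcc⟩)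
      · rcases (hnzc k).lt_or_gt with hcc | hcc
        · exact Or.inr (Or.inl ⟨hb, hcc⟩)
        · exact Or.inl (Or.inr ⟨ha, hcc⟩)
    · rintro ((⟨ha, hb⟩ | ⟨ha, hb⟩) | (⟨ha, hb⟩ | ⟨ha, hb⟩))
      · rcases (hnz2 k).lt_or_gt with h2' | h2'
        · exact Or.inl ⟨ha, h2'⟩
        · exact absurd ⟨ha, h2', hb⟩ (forb k)
      · rcases (hnz2 k).lt_or_gt with h2' | h2'
        · exact absurd ⟨ha, h2', hb⟩ (forb' k)
        · exact Or.inr ⟨ha, h2'⟩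
      · rcases (hnz1 k).lt_or_gt with h1' | h1'
        · exact Or.inr ⟨h1', ha⟩
        · exact absurd ⟨h1', ha, hb⟩ (forb k)
      · rcases (hnz1 k).lt_or_gt with h1' | h1'
        · exact absurd ⟨h1', ha, hb⟩ (forb' k)
        · exact Or.inl ⟨h1', ha⟩
  · rw [Finset.disjoint_left]
    intro k hk1 hk2
    rw [mem_SepSet_iff hU1 hC hx1 hc] at hk1
    rw [mem_SepSet_iff hU2 hC hx2 hc] at hk2
    rcases hk1 with ⟨ha, hb⟩ | ⟨ha, hb⟩ <;> rcases hk2 with ⟨hd, he⟩ | ⟨hd, he⟩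
    · exact forb k ⟨ha, hd, hb⟩
    · linarith
    · linarith
    · exact forb' k ⟨ha, hd, hb⟩

end S3aux


/-- Let `B` be a resonant band of `A` and set
`δ := ∏_{k ∈ Sep(U_1(B), U_2(B))} r k`. Then `δ = 1` or `δ = −1`; for every chamber
`C ⊆ B` one has `Δ(U_1(B), C) = −δ·Δ(U_2(B), C)`; and consequently
`∇_1(B) = −δ·∇_2(B)`; in particular `∇_2(B) = ±∇_1(B)`. -/
theorem statement3 {n : ℕ} (α : Fin n → AffForm) (hA : IsArrangement α)
    (q r : Fin n → ℂ) (hq : ∀ i, q i ≠ 0) (hr0 : ∀ i, r i ≠ 0) (hrq : ∀ i, r i ^ 2 = q i)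
    (chambers : Finset (Set Pt)) (hch : ∀ C : Set Pt, C ∈ chambers ↔ IsChamber α C)
    (i j : Fin n) (B U1 U2 : Set Pt) (hB : BandData α i j B U1 U2)
    (hres : Delta α r U1 U2 = 0)
    (δ : ℂ) (hδ : δ = ∏ k ∈ SepSet α U1 U2, r k) :
    (δ = 1 ∨ δ = -1) ∧
    (∀ C : Set Pt, IsChamber α C → C ⊆ B →
      Delta α r U1 C = -δ * Delta α r U2 C) ∧
    wave α chambers r U1 B = (-δ) • wave α chambers r U2 B ∧
    (wave α chambers r U2 B = wave α chambers r U1 B ∨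
      wave α chambers r U2 B = -wave α chambers r U1 B) := by
  have hδ0 : δ ≠ 0 := by
    rw [hδ]; exact Finset.prod_ne_zero_iff.mpr (fun k _ => hr0 k)
  have hDe : Delta α r U1 U2 = δ - δ⁻¹ := by
    unfold Delta
    rw [Finset.prod_inv_distrib, ← hδ]
  have hδinv : δ = δ⁻¹ := by
    rw [hDe] at hres
    exact sub_eq_zero.mp hres
  have hδδ : δ * δ = 1 := by
    have h := mul_inv_cancel₀ hδ0
    rw [← hδinv] at h
    exact h
  have hδ1 : δ = 1 ∨ δ = -1 := by
    have h : (δ - 1) * (δ + 1) = 0 := by linear_combination hδδ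
    rcases mul_eq_zero.mp h with h' | h'
    · exact Or.inl (sub_eq_zero.mp h')
    · exact Or.inr (eq_neg_of_add_eq_zero_left h')
  have key : ∀ C : Set Pt, IsChamber α C → C ⊆ B →
      Delta α r U1 C = -δ * Delta α r U2 C := by
    intro C hCc hCB
    obtain ⟨hun, hdis⟩ := S3aux.sep_union_disjoint α i j B U1 U2 hB C hCc hCB
    set P1 := ∏ k ∈ SepSet α U1 C, r k with hP1
    set P2 := ∏ k ∈ SepSet α U2 C, r k with hP2
    have hP10 : P1 ≠ 0 := Finset.prod_ne_zero_iff.mpr (fun k _ => hr0 k)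
    have hP20 : P2 ≠ 0 := Finset.prod_ne_zero_iff.mpr (fun k _ => hr0 k)
    have hPP : δ = P1 * P2 := by rw [hδ, hun, Finset.prod_union hdis]
    have hD1 : Delta α r U1 C = P1 - P1⁻¹ := by
      rw [hP1]; unfold Delta; rw [Finset.prod_inv_distrib]
    have hD2 : Delta α r U2 C = P2 - P2⁻¹ := by
      rw [hP2]; unfold Delta; rw [Finset.prod_inv_distrib]
    have h2 : P2 = δ * P1⁻¹ := by
      rw [hPP, mul_comm P1 P2, mul_assoc, mul_inv_cancel₀ hP10, mul_one]
    have h2i : P2⁻¹ = δ * P1 := by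
      rw [h2, mul_inv, inv_inv, ← hδinv]
    rw [hD1, hD2, h2i, h2]
    linear_combination (P1⁻¹ - P1) * hδδ
  have hw : wave α chambers r U1 B = (-δ) • wave α chambers r U2 B := by
    unfold wave
    rw [Finset.smul_sum]
    refine Finset.sum_congr rfl (fun C hCm => ?_)
    rw [Finset.mem_filter] at hCm
    rw [key C ((hch C).mp hCm.1) hCm.2, Finsupp.smul_single, smul_eq_mul]
  refine ⟨hδ1, key, hw, ?_⟩
  rcases hδ1 with h | h
  · right
    rw [h] at hw
    rw [hw]
    simp
  · left
    rw [h] at hw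
    rw [hw]
    simp


end
end

section
/- For each p ∈ {1, …, n−1}, the open convex set ∩_{i=1}^p {α_i > 0} ∩ ∩_{i=p+1}^n {α_i < 0} is nonempty and equals the chamber of A containing the open segment {(x, 0) : a_p < x < a_{p+1}}. Moreover, ∩_{i=1}^n {α_i < 0} is the chamber of A containing the origin, and ∩_{i=1}^n {α_i > 0} is the chamber of A containing every point (x, 0) with x > a_n. -/
open scoped Classical

noncomputable section

variable {n : ℕ}

/-- Coordinates as in the paper: every intersection point of two lines has `x₂ > 0`, line
`H i` meets the `x₁`-axis exactly at `(a i, 0)` with `0 < a 1 < … < a n`, and each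
`α i` is negative at the origin. -/
def GoodCoords (α : Fin n → AffForm) (a : Fin n → ℝ) : Prop :=
  (∀ i j : Fin n, i ≠ j → ∀ p : Pt, p ∈ (α i).line → p ∈ (α j).line → 0 < p.2) ∧
  (∀ i : Fin n, (α i).line ∩ {p : Pt | p.2 = 0} = {((a i : ℝ), (0 : ℝ))}) ∧
  StrictMono a ∧ (∀ i : Fin n, 0 < a i) ∧ ∀ i : Fin n, (α i).eval (0, 0) < 0

/-- `Upos α p = ∩_{i ≤ p} {α_i > 0} ∩ ∩_{i > p} {α_i < 0}` in the 1-indexed convention of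
the paper: for `1 ≤ p ≤ n-1` it is the chamber `U_p`, `Upos α 0 = U_0`, and
`Upos α n = U_0^∨`. -/
def Upos (α : Fin n → AffForm) (p : ℕ) : Set Pt :=
  {x : Pt | ∀ i : Fin n, if (i : ℕ) < p then 0 < (α i).eval x else (α i).eval x < 0}

/-- `ch²(A)`: the chambers other than `U_0, U_1, …, U_{n-1}, U_0^∨`. -/
def ch2 (α : Fin n → AffForm) (chambers : Finset (Set Pt)) : Finset (Set Pt) :=
  chambers.filter fun C => ∀ p ≤ n, C ≠ Upos α p

/-- `d([U_p]) = −Σ_{C ∈ ch², α_p > 0, α_{p+1} < 0 on C} Δ(U_p, C)·[C]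
+ Σ_{C ∈ ch², α_p < 0, α_{p+1} > 0 on C} Δ(U_p, C)·[C]`, where `i`, `j` are the indices of
the lines `H_p`, `H_{p+1}` bounding `U_p` and `U = U_p`. -/
def dChain (α : Fin n → AffForm) (chambers : Finset (Set Pt)) (r : Fin n → ℂ)
    (i j : Fin n) (U : Set Pt) : Set Pt →₀ ℂ :=
  -(∑ C ∈ (ch2 α chambers).filter
      (fun C => (∀ x ∈ C, 0 < (α i).eval x) ∧ ∀ x ∈ C, (α j).eval x < 0),
      Finsupp.single C (Delta α r U C)) +
  ∑ C ∈ (ch2 α chambers).filter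
      (fun C => (∀ x ∈ C, (α i).eval x < 0) ∧ ∀ x ∈ C, 0 < (α j).eval x),
      Finsupp.single C (Delta α r U C)

/- ### Auxiliary lemmas -/

lemma AffForm.eval_combo (f : AffForm) (x y : Pt) (t s : ℝ) (h : t + s = 1) :
    f.eval (t • x + s • y) = t * f.eval x + s * f.eval y := by
  have hs : s = 1 - t := by linarith
  subst hs
  simp only [AffForm.eval, Prod.fst_add, Prod.snd_add, Prod.smul_fst, Prod.smul_snd,
    smul_eq_mul]
  ring

lemma combo_pos {ex ey t s : ℝ} (hex : 0 < ex) (hey : 0 < ey) (ht : 0 ≤ t) (hs : 0 ≤ s)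
    (hts : t + s = 1) : 0 < t * ex + s * ey := by
  rcases ht.lt_or_eq with h | h
  · have h1 : 0 < t * ex := mul_pos h hex
    have h2 : 0 ≤ s * ey := mul_nonneg hs hey.le
    linarith
  · have hs1 : s = 1 := by linarith
    rw [← h, hs1]; simpa using hey

lemma combo_neg {ex ey t s : ℝ} (hex : ex < 0) (hey : ey < 0) (ht : 0 ≤ t) (hs : 0 ≤ s)
    (hts : t + s = 1) : t * ex + s * ey < 0 := by
  have := combo_pos (neg_pos.mpr hex) (neg_pos.mpr hey) ht hs hts
  nlinarith

lemma upos_convex (α : Fin n → AffForm) (p : ℕ) : Convex ℝ (Upos α p) := by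
  intro x hx y hy t s ht hs hts
  intro i
  have h := AffForm.eval_combo (α i) x y t s hts
  have hx' := hx i
  have hy' := hy i
  by_cases hip : (i : ℕ) < p
  · simp only [if_pos hip] at hx' hy' ⊢
    rw [h]; exact combo_pos hx' hy' ht hs hts
  · simp only [if_neg hip] at hx' hy' ⊢
    rw [h]; exact combo_neg hx' hy' ht hs hts

lemma upos_subset (α : Fin n → AffForm) (p : ℕ) : Upos α p ⊆ complement α := by
  intro x hx i
  have := hx i
  by_cases hip : (i : ℕ) < p
  · simp only [if_pos hip] at this; exact ne_of_gt this
  · simp only [if_neg hip] at this; exact ne_of_lt this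

lemma sign_aux (α : Fin n → AffForm) {S : Set Pt} (hS : IsPreconnected S)
    (hsub : S ⊆ complement α) {x y : Pt} (hx : x ∈ S) (hy : y ∈ S) (i : Fin n)
    (hpos : 0 < (α i).eval y) : 0 < (α i).eval x := by
  by_contra h
  have hxneg : (α i).eval x < 0 := lt_of_le_of_ne (not_lt.mp h) (hsub hx i)
  have hiv := hS.intermediate_value hx hy ((α i).continuous_eval.continuousOn)
  have h0 : (0 : ℝ) ∈ Set.Icc ((α i).eval x) ((α i).eval y) := ⟨hxneg.le, hpos.le⟩
  obtain ⟨z, hz, hz0⟩ := hiv h0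
  exact hsub hz i hz0

lemma sign_eq_component (α : Fin n → AffForm) (q x : Pt) (hq : q ∈ complement α)
    (hx : x ∈ connectedComponentIn (complement α) q) (i : Fin n) :
    (0 < (α i).eval x ↔ 0 < (α i).eval q) := by
  have hS : IsPreconnected (connectedComponentIn (complement α) q) :=
    isPreconnected_connectedComponentIn
  have hqS : q ∈ connectedComponentIn (complement α) q := mem_connectedComponentIn hq
  have hsub : connectedComponentIn (complement α) q ⊆ complement α :=
    connectedComponentIn_subset _ _
  exact ⟨fun h => sign_aux α hS hsub hqS hx i h, fun h => sign_aux α hS hsub hx hqS i h⟩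

lemma upos_eq_component (α : Fin n → AffForm) (p : ℕ) (q : Pt) (hq : q ∈ Upos α p) :
    Upos α p = connectedComponentIn (complement α) q := by
  have hsub : Upos α p ⊆ complement α := upos_subset α p
  apply Set.Subset.antisymm
  · exact ((upos_convex α p).isPreconnected).subset_connectedComponentIn hq hsub
  · intro x hx
    intro i
    have hqc : q ∈ complement α := hsub hq
    have hsign := sign_eq_component α q x hqc hx i
    have hxc : x ∈ complement α := connectedComponentIn_subset _ _ hx
    have hqi := hq i
    by_cases hip : (i : ℕ) < p
    · simp only [if_pos hip] at hqi ⊢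
      exact hsign.mpr hqi
    · simp only [if_neg hip] at hqi ⊢
      rcases lt_trichotomy ((α i).eval x) 0 with h | h | h
      · exact h
      · exact absurd h (hxc i)
      · exact absurd (hsign.mp h) (not_lt.mpr hqi.le)

lemma upos_isChamber (α : Fin n → AffForm) (p : ℕ) (q : Pt) (hq : q ∈ Upos α p) :
    IsChamber α (Upos α p) :=
  ⟨q, upos_subset α p hq, upos_eq_component α p q hq⟩

lemma eval_axis {α : Fin n → AffForm} {a : Fin n → ℝ} (hco : GoodCoords α a) (i : Fin n) :
    0 < (α i).a ∧ ∀ x : ℝ, (α i).eval (x, 0) = (α i).a * (x - a i) := by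
  obtain ⟨-, hline, -, hapos, hneg⟩ := hco
  have hmem : ((a i : ℝ), (0 : ℝ)) ∈ (α i).line ∩ {p : Pt | p.2 = 0} := by
    rw [hline i]; exact rfl
  have h0 : (α i).a * a i + (α i).b * 0 + (α i).c = 0 := hmem.1
  have hc : (α i).c < 0 := by
    have := hneg i
    simpa [AffForm.eval] using this
  have ha : 0 < (α i).a := by
    by_contra hA
    push_neg at hA
    nlinarith [hapos i]
  refine ⟨ha, fun x => ?_⟩
  show (α i).a * x + (α i).b * 0 + (α i).c = (α i).a * (x - a i)
  linear_combination h0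

lemma mem_upos_axis {α : Fin n → AffForm} {a : Fin n → ℝ} (hco : GoodCoords α a)
    (p : ℕ) (x : ℝ) (h : ∀ i : Fin n, if (i : ℕ) < p then a i < x else x < a i) :
    ((x, (0 : ℝ)) : Pt) ∈ Upos α p := by
  intro i
  obtain ⟨hA, heval⟩ := eval_axis hco i
  have hi := h i
  by_cases hip : (i : ℕ) < p
  · simp only [if_pos hip] at hi ⊢
    rw [heval x]
    exact mul_pos hA (by linarith)
  · simp only [if_neg hip] at hi ⊢
    rw [heval x]
    exact mul_neg_of_pos_of_neg hA (by linarith)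

open Fin.NatCast

/-- (Lines indexed by `Fin (m+2)`, i.e. `n = m + 2 ≥ 2` lines, `1`-indexed
as `H_p ↔ α ↑(p-1)`.) For each `p ∈ {1, …, n−1}`, the open convex set
`Upos α p = ∩_{i ≤ p} {α_i > 0} ∩ ∩_{i > p} {α_i < 0}` is nonempty and equals the chamber
of `A` containing the open segment `{(x, 0) : a_p < x < a_{p+1}}`. Moreover
`∩_i {α_i < 0}` is the chamber containing the origin, and `∩_i {α_i > 0}` is the chamber
containing every point `(x, 0)` with `x > a_n`. -/
theorem statement4 {m : ℕ} (α : Fin (m + 2) → AffForm) (a : Fin (m + 2) → ℝ)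
    (hA : IsArrangement α) (hco : GoodCoords α a)
    (p : ℕ) (hp1 : 1 ≤ p) (hpn : p ≤ m + 1) :
    (Upos α p).Nonempty ∧ IsChamber α (Upos α p) ∧
    (∀ x : ℝ, a ↑(p - 1) < x → x < a ↑p →
      ((x, (0 : ℝ)) : Pt) ∈ Upos α p ∧
      Upos α p = connectedComponentIn (complement α) ((x, (0 : ℝ)) : Pt)) ∧
    (((0 : ℝ), (0 : ℝ)) : Pt) ∈ Upos α 0 ∧ IsChamber α (Upos α 0) ∧
    Upos α 0 = connectedComponentIn (complement α) (((0 : ℝ), (0 : ℝ)) : Pt) ∧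
    IsChamber α (Upos α (m + 2)) ∧
    (∀ x : ℝ, a ↑(m + 1) < x →
      ((x, (0 : ℝ)) : Pt) ∈ Upos α (m + 2) ∧
      Upos α (m + 2) = connectedComponentIn (complement α) ((x, (0 : ℝ)) : Pt)) := by
  have hsm := hco.2.2.1
  have hv1 : ((↑(p - 1) : Fin (m + 2)) : ℕ) = p - 1 := by
    rw [Fin.val_natCast]; exact Nat.mod_eq_of_lt (by omega)
  have hv2 : ((↑p : Fin (m + 2)) : ℕ) = p := by
    rw [Fin.val_natCast]; exact Nat.mod_eq_of_lt (by omega)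
  have hv3 : ((↑(m + 1) : Fin (m + 2)) : ℕ) = m + 1 := by
    rw [Fin.val_natCast]; exact Nat.mod_eq_of_lt (by omega)
  have haxis : ∀ x : ℝ, a ↑(p - 1) < x → x < a ↑p →
      ∀ i : Fin (m + 2), if (i : ℕ) < p then a i < x else x < a i := by
    intro x h1 h2 i
    by_cases hip : (i : ℕ) < p
    · simp only [if_pos hip]
      have : a i ≤ a ↑(p - 1) := hsm.monotone (by rw [Fin.le_def, hv1]; omega)
      linarith
    · simp only [if_neg hip]
      have : a ↑p ≤ a i := hsm.monotone (by rw [Fin.le_def, hv2]; omega)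
      linarith
  have hlt : a ↑(p - 1) < a ↑p := hsm (by rw [Fin.lt_def, hv1, hv2]; omega)
  have hx0b1 : a ↑(p - 1) < (a ↑(p - 1) + a ↑p) / 2 := by linarith
  have hx0b2 : (a ↑(p - 1) + a ↑p) / 2 < a ↑p := by linarith
  have hx0mem : (((a ↑(p - 1) + a ↑p) / 2, (0 : ℝ)) : Pt) ∈ Upos α p :=
    mem_upos_axis hco p _ (haxis _ hx0b1 hx0b2)
  have horig : (((0 : ℝ), (0 : ℝ)) : Pt) ∈ Upos α 0 := by
    intro i
    simp only [Nat.not_lt_zero, if_false]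
    exact hco.2.2.2.2 i
  have htopmem : ∀ x : ℝ, a ↑(m + 1) < x → ((x, (0 : ℝ)) : Pt) ∈ Upos α (m + 2) := by
    intro x hx
    apply mem_upos_axis hco
    intro i
    simp only [if_pos i.isLt]
    have : a i ≤ a ↑(m + 1) := hsm.monotone (by rw [Fin.le_def, hv3]; omega)
    linarith
  have htop0 : ((a ↑(m + 1) + 1, (0 : ℝ)) : Pt) ∈ Upos α (m + 2) :=
    htopmem _ (by linarith)
  refine ⟨⟨_, hx0mem⟩, upos_isChamber α p _ hx0mem, ?_, horig,
    upos_isChamber α 0 _ horig, upos_eq_component α 0 _ horig,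
    upos_isChamber α (m + 2) _ htop0, ?_⟩
  · intro x h1 h2
    have hmem := mem_upos_axis hco p x (haxis x h1 h2)
    exact ⟨hmem, upos_eq_component α p _ hmem⟩
  · intro x hx
    exact ⟨htopmem x hx, upos_eq_component α (m + 2) _ (htopmem x hx)⟩

end
end
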